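/- arXiv:1901.04825 — 5 statements merged into one kernel-verified Lean document; each statement's English description precedes it below -/
import Mathlib

section
/- For Re(c) > Re(b) > 0 and 0 ≤ y < 1, the incomplete Pochhammer ratio admits the representation [b,c;y]_n = (1/B(b,c-b)) · (y^{b+n}/(b+n)) (1-y)^{c-b} · ₂F₁(1, c+n; b+n+1; y). -/
open Complex

/-- Incomplete beta function `B_y(x,z) = ∫_0^y t^(x-1) (1-t)^(z-1) dt`. -/
noncomputable def incBeta (y : ℝ) (x z : ℂ) : ℂ :=
  ∫ t in (0:ℝ)..y, (t:ℂ)^(x-1) * (1 - (t:ℂ))^(z-1)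

/-- Pochhammer symbol `(a)_n`. -/
noncomputable def poch (a : ℂ) (n : ℕ) : ℂ := ∏ i ∈ Finset.range n, (a + i)

/-- Incomplete Pochhammer ratio `[b,c;y]_n`. -/
noncomputable def ipochL (b c : ℂ) (y : ℝ) (n : ℕ) : ℂ :=
  incBeta y (b + n) (c - b) / Complex.betaIntegral b (c - b)

/-- Incomplete Pochhammer ratio `{b,c;y}_n`. -/
noncomputable def ipochU (b c : ℂ) (y : ℝ) (n : ℕ) : ℂ :=
  incBeta (1 - y) (c - b) (b + n) / Complex.betaIntegral b (c - b)

/-- Gauss hypergeometric series `₂F₁(a,b;c;x)`. -/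
noncomputable def hyp2F1 (a b c x : ℂ) : ℂ :=
  ∑' n : ℕ, poch a n * poch b n / poch c n * x^n / (n.factorial : ℂ)

/-- Incomplete Gauss hypergeometric function `₂F₁(a,[b,c;y];x)`. -/
noncomputable def inc2F1L (a b c : ℂ) (y : ℝ) (x : ℂ) : ℂ :=
  ∑' n : ℕ, poch a n * ipochL b c y n * x^n / (n.factorial : ℂ)

/-- Incomplete Gauss hypergeometric function `₂F₁(a,{b,c;y};x)`. -/
noncomputable def inc2F1U (a b c : ℂ) (y : ℝ) (x : ℂ) : ℂ :=
  ∑' n : ℕ, poch a n * ipochU b c y n * x^n / (n.factorial : ℂ)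

/-- Incomplete confluent hypergeometric function `₁F₁([a,b;y];x)`. -/
noncomputable def inc1F1L (a b : ℂ) (y : ℝ) (x : ℂ) : ℂ :=
  ∑' n : ℕ, ipochL a b y n * x^n / (n.factorial : ℂ)

/-- Incomplete confluent hypergeometric function `₁F₁({a,b;y};x)`. -/
noncomputable def inc1F1U (a b : ℂ) (y : ℝ) (x : ℂ) : ℂ :=
  ∑' n : ℕ, ipochU a b y n * x^n / (n.factorial : ℂ)

/-- Incomplete Appell function `F₁[a,b,c;d;x,z;y]`. -/
noncomputable def incAppellF1 (a b c d x z : ℂ) (y : ℝ) : ℂ :=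
  ∑' p : ℕ × ℕ, ipochL a d y (p.1 + p.2) * poch b p.1 * poch c p.2 *
    x^p.1 * z^p.2 / ((p.1.factorial : ℂ) * (p.2.factorial : ℂ))

/-- Incomplete Riemann–Liouville fractional derivative `D_z^μ[f(z);y]`. -/
noncomputable def incRL (μ : ℂ) (f : ℂ → ℂ) (y : ℝ) (z : ℂ) : ℂ :=
  z^(-μ) / Complex.Gamma (-μ) * ∫ u in (0:ℝ)..y, f ((u:ℂ) * z) * (1 - (u:ℂ))^(-μ-1)


open Set Filter Topology in
lemma incBeta_integrable {p q : ℂ} (hp : 0 < p.re) (hq : 0 < q.re) {y : ℝ}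
    (hy0 : 0 ≤ y) (hy1 : y ≤ 1) :
    IntervalIntegrable (fun t : ℝ => (t:ℂ)^(p-1) * (1 - (t:ℂ))^(q-1)) MeasureTheory.volume 0 y := by
  apply (Complex.betaIntegral_convergent hp hq).mono_set
  rw [Set.uIcc_of_le hy0, Set.uIcc_of_le zero_le_one]
  exact Set.Icc_subset_Icc le_rfl hy1

open Set Filter Topology in
lemma incBeta_rec {p q : ℂ} (hp : 0 < p.re) (hq : 0 < q.re) {y : ℝ}
    (hy0 : 0 ≤ y) (hy1 : y < 1) :
    p * incBeta y p q = (y:ℂ)^p * (1 - (y:ℂ))^q + (p + q) * incBeta y (p+1) q := by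
  have hp' : 0 < re (p + 1) := by rw [add_re, one_re]; positivity
  have hq' : 0 < re (q + 1) := by rw [add_re, one_re]; positivity
  let F : ℝ → ℂ := fun x => (x : ℂ) ^ p * (1 - (x : ℂ)) ^ q
  have hc : ContinuousOn F (Icc 0 y) := by
    refine (continuousOn_of_forall_continuousAt fun x hx => ?_).mul
        (continuousOn_of_forall_continuousAt fun x hx => ?_)
    · refine (continuousAt_cpow_const_of_re_pos (Or.inl ?_) hp).comp continuous_ofReal.continuousAt
      rw [ofReal_re]; exact hx.1
    · refine (continuousAt_cpow_const_of_re_pos (Or.inl ?_) hq).comp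
        (continuous_const.sub continuous_ofReal).continuousAt
      rw [sub_re, one_re, ofReal_re, sub_nonneg]
      exact hx.2.trans hy1.le
  have hder : ∀ x : ℝ, x ∈ Ioo (0 : ℝ) y →
      HasDerivAt F (p * ((x : ℂ) ^ (p - 1) * (1 - (x : ℂ)) ^ q) -
        q * ((x : ℂ) ^ p * (1 - (x : ℂ)) ^ (q - 1))) x := by
    intro x hx
    have hx1 : x < 1 := hx.2.trans hy1
    have U : HasDerivAt (fun z : ℂ => z ^ p) (p * (x : ℂ) ^ (p - 1)) ↑x := by
      have := @HasDerivAt.cpow_const _ _ _ p (hasDerivAt_id (x : ℂ)) (Or.inl ?_)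
      · simp only [id_eq, mul_one] at this
        exact this
      · rw [id_eq, ofReal_re]; exact hx.1
    have V : HasDerivAt (fun z : ℂ => (1 - z) ^ q) (-q * (1 - (x : ℂ)) ^ (q - 1)) ↑x := by
      have A := @HasDerivAt.cpow_const _ _ _ q (hasDerivAt_id (1 - (x : ℂ))) (Or.inl ?_)
      swap; · rw [id, sub_re, one_re, ofReal_re, sub_pos]; exact hx1
      simp_rw [id] at A
      have B : HasDerivAt (fun z : ℂ => 1 - z) (-1) ↑x := by
        apply HasDerivAt.const_sub; apply hasDerivAt_id
      refine (HasDerivAt.comp (x : ℂ) A B).congr_deriv ?_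
      ring
    refine ((U.mul V).comp_ofReal).congr_deriv ?_
    ring
  have hA : IntervalIntegrable (fun x : ℝ => p * ((x : ℂ) ^ (p-1) * (1 - (x : ℂ)) ^ q))
      MeasureTheory.volume 0 y := by
    have h1 := (incBeta_integrable hp hq' hy0 hy1.le).const_mul p
    rwa [add_sub_cancel_right] at h1
  have hB : IntervalIntegrable (fun x : ℝ => q * ((x : ℂ) ^ p * (1 - (x : ℂ)) ^ (q-1)))
      MeasureTheory.volume 0 y := by
    have h2 := (incBeta_integrable hp' hq hy0 hy1.le).const_mul q
    rwa [add_sub_cancel_right] at h2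
  have int_ev := intervalIntegral.integral_eq_sub_of_hasDerivAt_of_le hy0 hc hder (hA.sub hB)
  have hF0 : F 0 = 0 := by
    have hp0 : p ≠ 0 := fun h => by simp [h] at hp
    simp [F, Complex.zero_cpow hp0]
  rw [hF0, sub_zero] at int_ev
  have hBval : (∫ x in (0:ℝ)..y, ((x : ℂ) ^ p * (1 - (x : ℂ)) ^ (q-1))) = incBeta y (p+1) q := by
    simp only [incBeta, add_sub_cancel_right]
  have key : (∫ x in (0:ℝ)..y, ((x : ℂ) ^ (p-1) * (1 - (x : ℂ)) ^ q)) =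
      incBeta y p q - incBeta y (p+1) q := by
    have hcongr : (∫ x in (0:ℝ)..y, ((x : ℂ) ^ (p-1) * (1 - (x : ℂ)) ^ q)) =
        ∫ x in (0:ℝ)..y, ((x:ℂ)^(p-1) * (1 - (x:ℂ))^(q-1) - (x:ℂ)^p * (1 - (x:ℂ))^(q-1)) := by
      apply intervalIntegral.integral_congr_ae
      filter_upwards with x hx
      rw [Set.uIoc_of_le hy0] at hx
      have hx0 : (x:ℂ) ≠ 0 := by exact_mod_cast ne_of_gt hx.1
      have hx1 : (1:ℂ) - x ≠ 0 := by
        rw [sub_ne_zero]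
        have hxlt : x < 1 := lt_of_le_of_lt hx.2 hy1
        exact_mod_cast hxlt.ne'
      have e1 := cpow_add (q-1) 1 hx1
      rw [sub_add_cancel, cpow_one] at e1
      have e2 := cpow_add (p-1) 1 hx0
      rw [sub_add_cancel, cpow_one] at e2
      rw [e1, e2]
      ring
    have hsub := intervalIntegral.integral_sub (incBeta_integrable hp hq hy0 hy1.le)
      (by simpa only [add_sub_cancel_right] using incBeta_integrable hp' hq hy0 hy1.le)
    rw [hcongr, hsub, hBval]
    rfl
  have split := intervalIntegral.integral_sub hA hB
  rw [intervalIntegral.integral_const_mul, intervalIntegral.integral_const_mul, key, hBval]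
    at split
  rw [split] at int_ev
  simp only [F] at int_ev
  linear_combination int_ev

lemma poch_succ (a : ℂ) (n : ℕ) : poch a (n+1) = poch a n * (a + n) := by
  simp [poch, Finset.prod_range_succ]

lemma poch_succ' (a : ℂ) (n : ℕ) : poch a (n+1) = a * poch (a+1) n := by
  rw [poch, Finset.prod_range_succ', poch]
  push_cast
  rw [mul_comm]
  congr 1
  · norm_num
  · exact Finset.prod_congr rfl (fun i _ => by push_cast; ring)

lemma poch_ne_zero {a : ℂ} (ha : 0 < a.re) (n : ℕ) : poch a n ≠ 0 := by
  rw [poch]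
  apply Finset.prod_ne_zero_iff.mpr
  intro i _
  intro h
  have : (a + i).re = 0 := by rw [h]; simp
  rw [add_re, natCast_re] at this
  have : (0:ℝ) ≤ (i:ℝ) := Nat.cast_nonneg i
  linarith [Complex.add_re a i, Nat.cast_nonneg (α := ℝ) i, ha]

lemma poch_one (k : ℕ) : poch 1 k = (Nat.factorial k : ℂ) := by
  induction k with
  | zero => simp [poch]
  | succ k IH =>
    rw [poch_succ, IH, Nat.factorial_succ]
    push_cast
    ring

open Set Filter Topology in
lemma incBeta_expand {p q : ℂ} (hp : 0 < p.re) (hq : 0 < q.re) {y : ℝ}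
    (hy0 : 0 ≤ y) (hy1 : y < 1) (N : ℕ) :
    incBeta y p q = (∑ k ∈ Finset.range N,
        poch (p+q) k / poch p (k+1) * (y:ℂ)^(p+k) * (1 - (y:ℂ))^q)
      + poch (p+q) N / poch p N * incBeta y (p + N) q := by
  induction N with
  | zero => simp [poch]
  | succ N IH =>
    rw [Finset.sum_range_succ, IH, add_assoc]
    congr 1
    have hpN : 0 < (p + (N:ℂ)).re := by
      rw [add_re, natCast_re]
      have : (0:ℝ) ≤ (N:ℝ) := Nat.cast_nonneg N
      linarith
    have hfac : (p + (N:ℂ)) ≠ 0 := fun h => by simp [h] at hpN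
    have hrec := incBeta_rec hpN hq hy0 hy1
    have hcast : incBeta y (p + (N:ℂ) + 1) q = incBeta y (p + ((N+1:ℕ):ℂ)) q := by
      push_cast
      ring_nf
    rw [hcast] at hrec
    have key : incBeta y (p + (N:ℂ)) q =
        ((y:ℂ)^(p+(N:ℂ)) * (1 - (y:ℂ))^q + (p + (N:ℂ) + q) * incBeta y (p + ((N+1:ℕ):ℂ)) q)
          / (p + (N:ℂ)) := by
      rw [eq_div_iff hfac]; linear_combination hrec
    rw [key, poch_succ p N, poch_succ (p+q) N]
    have hpochN : poch p N ≠ 0 := poch_ne_zero hp N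
    field_simp
    ring

open Set Filter Topology in
lemma incBeta_bound {p q : ℂ} (hp : 0 < p.re) (hq : 0 < q.re) {y : ℝ}
    (hy0 : 0 ≤ y) (hy1 : y < 1) (N : ℕ) :
    ‖incBeta y (p + N) q‖ ≤ y^N * |∫ t in (0:ℝ)..y, ‖(t:ℂ)^(p-1) * (1 - (t:ℂ))^(q-1)‖| := by
  have hint : IntervalIntegrable (fun t : ℝ => y^N * ‖(t:ℂ)^(p-1) * (1 - (t:ℂ))^(q-1)‖)
      MeasureTheory.volume 0 y :=
    ((incBeta_integrable hp hq hy0 hy1.le).norm).const_mul _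
  have h := intervalIntegral.norm_integral_le_abs_of_norm_le (μ := MeasureTheory.volume)
    (f := fun t : ℝ => (t:ℂ)^(p + N - 1) * (1 - (t:ℂ))^(q-1))
    (a := 0) (b := y)
    (g := fun t : ℝ => y^N * ‖(t:ℂ)^(p-1) * (1 - (t:ℂ))^(q-1)‖) ?_ hint
  · rw [intervalIntegral.integral_const_mul] at h
    refine h.trans ?_
    rw [abs_mul, _root_.abs_of_nonneg (pow_nonneg hy0 N)]
  · filter_upwards [MeasureTheory.ae_restrict_mem measurableSet_uIoc] with t ht
    rw [Set.uIoc_of_le hy0] at ht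
    have ht0 : (0:ℝ) < t := ht.1
    have ht1 : t < 1 := lt_of_le_of_lt ht.2 hy1
    simp only [norm_mul, Complex.norm_cpow_eq_rpow_re_of_pos ht0]
    have : (p + N - 1).re = (N:ℝ) + (p-1).re := by simp; ring
    rw [this, Real.rpow_add ht0, Real.rpow_natCast]
    rw [mul_assoc]
    gcongr
    exact ht.2

open Set Filter Topology in
lemma incBeta_hasSum {p q : ℂ} (hp : 0 < p.re) (hq : 0 < q.re) {y : ℝ}
    (hy0 : 0 ≤ y) (hy1 : y < 1) :
    HasSum (fun k : ℕ => poch (p+q) k / poch p (k+1) * (y:ℂ)^(p+(k:ℂ)) * (1 - (y:ℂ))^q)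
      (incBeta y p q) := by
  set g : ℕ → ℂ := fun k => poch (p+q) k / poch p (k+1) * (y:ℂ)^(p+(k:ℂ)) * (1 - (y:ℂ))^q
    with hg
  set J := |∫ t in (0:ℝ)..y, ‖(t:ℂ)^(p-1) * (1 - (t:ℂ))^(q-1)‖| with hJdef
  have hJ0 : (0:ℝ) ≤ J := abs_nonneg _
  set A : ℕ → ℂ := fun N => poch (p+q) N / poch p N with hAdef
  set rem : ℕ → ℂ := fun N => A N * incBeta y (p+(N:ℂ)) q with hremdef
  set w : ℕ → ℝ := fun N => ‖A N‖ * (y^N * J) with hwdef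
  have hw_nonneg : ∀ N, 0 ≤ w N := fun N => by
    apply mul_nonneg (norm_nonneg _) (mul_nonneg (pow_nonneg hy0 N) hJ0)
  have hpN : ∀ N : ℕ, (0:ℝ) < p.re + N := fun N => by positivity
  have hrem_le : ∀ N, ‖rem N‖ ≤ w N := fun N => by
    rw [hremdef, hwdef]
    simp only [norm_mul]
    exact mul_le_mul_of_nonneg_left (incBeta_bound hp hq hy0 hy1 N) (norm_nonneg _)
  have hAratio : ∀ N : ℕ, ‖A (N+1)‖ ≤ ‖A N‖ * (1 + ‖q‖/(p.re + N)) := by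
    intro N
    have hpochN : poch p N ≠ 0 := poch_ne_zero hp N
    have hfac : (p + (N:ℂ)) ≠ 0 := by
      intro h
      have := congrArg Complex.re h
      rw [add_re, natCast_re, zero_re] at this
      linarith [hpN N]
    have hstep : A (N+1) = A N * ((p + q + N)/(p + N)) := by
      rw [hAdef]
      simp only
      rw [poch_succ, poch_succ, div_mul_div_comm]
    rw [hstep, norm_mul]
    have h1 : ‖p + q + (N:ℂ)‖ ≤ ‖p + (N:ℂ)‖ + ‖q‖ := by
      calc ‖p + q + (N:ℂ)‖ = ‖(p + (N:ℂ)) + q‖ := by ring_nf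
        _ ≤ ‖p + (N:ℂ)‖ + ‖q‖ := norm_add_le _ _
    have h2 : p.re + N ≤ ‖p + (N:ℂ)‖ := by
      simpa only [add_re, natCast_re] using Complex.re_le_norm (p + (N:ℂ))
    have hpos : (0:ℝ) < ‖p + (N:ℂ)‖ := lt_of_lt_of_le (hpN N) h2
    gcongr
    calc ‖(p + q + (N:ℂ)) / (p + (N:ℂ))‖ = ‖p + q + (N:ℂ)‖ / ‖p + (N:ℂ)‖ := norm_div _ _
      _ ≤ (‖p + (N:ℂ)‖ + ‖q‖) / ‖p + (N:ℂ)‖ := by gcongr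
      _ = 1 + ‖q‖/‖p + (N:ℂ)‖ := by rw [add_div, div_self (ne_of_gt hpos)]
      _ ≤ 1 + ‖q‖/(p.re + N) := by gcongr <;> first | exact hpN N | exact h2
  have hwratio : ∀ N : ℕ, w (N+1) ≤ ((1 + ‖q‖/(p.re + N)) * y) * w N := by
    intro N
    rw [hwdef]
    simp only
    calc ‖A (N+1)‖ * (y^(N+1) * J)
        ≤ (‖A N‖ * (1 + ‖q‖/(p.re + N))) * (y^(N+1) * J) := by
          apply mul_le_mul_of_nonneg_right (hAratio N)
          positivity
      _ = ((1 + ‖q‖/(p.re + N)) * y) * (‖A N‖ * (y^N * J)) := by ring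
  have hev : ∀ᶠ N : ℕ in atTop, (1 + ‖q‖/(p.re + N)) * y ≤ (1+y)/2 := by
    have htend : Tendsto (fun N : ℕ => (1 + ‖q‖/(p.re + N)) * y) atTop (𝓝 ((1+0)*y)) := by
      apply Tendsto.mul_const
      apply tendsto_const_nhds.add
      apply Tendsto.div_atTop tendsto_const_nhds
      apply Filter.tendsto_atTop_add_const_left
      exact tendsto_natCast_atTop_atTop
    have hlt : (1+0)*y < (1+y)/2 := by linarith
    exact htend.eventually (eventually_le_nhds hlt)
  have hwsum : Summable w := by
    apply summable_of_ratio_norm_eventually_le (r := (1+y)/2) (by linarith)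
    filter_upwards [hev] with N hN
    rw [Real.norm_of_nonneg (hw_nonneg _), Real.norm_of_nonneg (hw_nonneg _)]
    exact (hwratio N).trans (mul_le_mul_of_nonneg_right hN (hw_nonneg N))
  have hrem_tend : Tendsto rem atTop (𝓝 0) :=
    squeeze_zero_norm hrem_le hwsum.tendsto_atTop_zero
  have hpartial : ∀ N, ∑ k ∈ Finset.range N, g k = incBeta y p q - rem N := fun N =>
    eq_sub_of_add_eq (incBeta_expand hp hq hy0 hy1 N).symm
  have hg_summable : Summable g := by
    apply Summable.of_norm_bounded (g := fun N => w N + w (N+1))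
      (hwsum.add ((summable_nat_add_iff 1).mpr hwsum))
    intro N
    have h1 := hpartial N
    have h2 := hpartial (N+1)
    rw [Finset.sum_range_succ] at h2
    have hgN : g N = rem N - rem (N+1) := by linear_combination h2 - h1
    rw [hgN]
    exact (norm_sub_le _ _).trans (add_le_add (hrem_le N) (hrem_le (N+1)))
  have ht := hg_summable.hasSum
  have h2 : Tendsto (fun N => ∑ k ∈ Finset.range N, g k) atTop (𝓝 (incBeta y p q)) := by
    simpa only [hpartial, sub_zero] using tendsto_const_nhds.sub hrem_tend
  have := tendsto_nhds_unique ht.tendsto_sum_nat h2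
  rwa [this] at ht

lemma incBeta_eq_hyp2F1 {p q : ℂ} (hp : 0 < p.re) (hq : 0 < q.re) {y : ℝ}
    (hy0 : 0 < y) (hy1 : y < 1) :
    incBeta y p q = (y:ℂ)^p / p * (1 - (y:ℂ))^q * hyp2F1 1 (p+q) (p+1) (y:ℂ) := by
  have h := (incBeta_hasSum hp hq hy0.le hy1).tsum_eq
  rw [← h, hyp2F1, ← tsum_mul_left]
  apply tsum_congr
  intro k
  have hp0 : p ≠ 0 := fun h => by simp [h] at hp
  have hp1 : 0 < (p+1).re := by rw [add_re, one_re]; positivity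
  have hpoch : poch (p+1) k ≠ 0 := poch_ne_zero hp1 k
  have hfact : ((Nat.factorial k : ℕ) : ℂ) ≠ 0 := by
    exact_mod_cast (Nat.factorial_ne_zero k)
  have hyne : (y:ℂ) ≠ 0 := by exact_mod_cast ne_of_gt hy0
  rw [poch_one, poch_succ', cpow_add _ _ hyne, cpow_natCast]
  field_simp

theorem stmt3 (b c : ℂ) (n : ℕ) (y : ℝ) (hb : 0 < b.re) (hbc : b.re < c.re)
    (hy0 : 0 ≤ y) (hy1 : y < 1) :
    ipochL b c y n = (1 / Complex.betaIntegral b (c - b)) *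
      ((y:ℂ)^(b + n) / (b + n)) * (1 - (y:ℂ))^(c - b) *
      hyp2F1 1 (c + n) (b + n + 1) (y:ℂ) := by
  have hp : 0 < (b + (n:ℂ)).re := by
    rw [add_re, natCast_re]
    have : (0:ℝ) ≤ (n:ℝ) := Nat.cast_nonneg n
    linarith
  have hq : 0 < (c - b).re := by rw [sub_re]; linarith
  have hpq : b + (n:ℂ) + (c - b) = c + (n:ℂ) := by ring
  rw [ipochL]
  rcases eq_or_lt_of_le hy0 with h0 | h0
  · rw [← h0]
    have hbn : (b + (n:ℂ)) ≠ 0 := fun h => by simp [h] at hp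
    simp [incBeta, intervalIntegral.integral_same, Complex.ofReal_zero,
      Complex.zero_cpow hbn]
  · have key := incBeta_eq_hyp2F1 hp hq h0 hy1
    rw [hpq] at key
    rw [key]
    ring
end

section
/- For 0 < y < 1, Re(c) > Re(b) > 0 and positive integer n, the incomplete Pochhammer ratio satisfies [b,c;y]_n = ((-1)^n Γ(c) / (Γ(c-b+n)Γ(b))) · y^{b+n} · (d^n/dy^n)[ y^{-b} B_y(b, c-b+n) ]. -/
open Complex

section Aux
open Complex Set MeasureTheory intervalIntegral

lemma auxInt {u v : ℂ} (hu : 0 < u.re) (hv : 0 < v.re) {y : ℝ} (hy0 : 0 ≤ y) (hy1 : y ≤ 1) :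
    IntervalIntegrable (fun t : ℝ => (t:ℂ)^(u-1) * (1 - (t:ℂ))^(v-1)) volume 0 y :=
  (Complex.betaIntegral_convergent hu hv).mono_set <| by
    rw [Set.uIcc_of_le hy0, Set.uIcc_of_le zero_le_one]
    exact Set.Icc_subset_Icc le_rfl hy1

lemma auxCont {u v : ℂ} (hu : 0 < u.re) {s : ℝ} (hs : s ∈ Ioo (0:ℝ) 1) :
    ContinuousAt (fun t : ℝ => (t:ℂ)^(u-1) * (1 - (t:ℂ))^(v-1)) s := by
  apply ContinuousAt.mul
  · exact (continuousAt_cpow_const (Or.inl (by simpa using hs.1))).comp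
      Complex.continuous_ofReal.continuousAt
  · exact (continuousAt_cpow_const (Or.inl (by simpa using hs.2))).comp
      (continuous_const.sub Complex.continuous_ofReal).continuousAt

/-- FTC for incBeta. -/
lemma auxFTC {u v : ℂ} (hu : 0 < u.re) (hv : 0 < v.re) {s : ℝ} (hs : s ∈ Ioo (0:ℝ) 1) :
    HasDerivAt (fun r : ℝ => incBeta r u v) ((s:ℂ)^(u-1) * (1 - (s:ℂ))^(v-1)) s := by
  exact intervalIntegral.integral_hasDerivAt_right
    (auxInt hu hv hs.1.le hs.2.le)
    (ContinuousAt.stronglyMeasurableAtFilter isOpen_Ioo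
      (fun x hx => auxCont hu hx) s hs)
    (auxCont hu hs)

/-- Derivative of `s ↦ (s:ℂ)^a`. -/
lemma auxCpow (a : ℂ) {s : ℝ} (hs : 0 < s) :
    HasDerivAt (fun r : ℝ => (r:ℂ)^a) (a * (s:ℂ)^(a-1)) s := by
  have U : HasDerivAt (fun y : ℂ => y ^ a) (a * (s : ℂ) ^ (a - 1)) (s:ℂ) := by
    have := @HasDerivAt.cpow_const _ _ _ a (hasDerivAt_id (s : ℂ)) (Or.inl (by simpa using hs))
    simpa using this
  simpa using U.comp_ofReal

/-- Incomplete integration by parts identity. -/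
lemma auxIBP {u v : ℂ} (hu : 0 < u.re) (hv : 0 < v.re) {s : ℝ} (hs : s ∈ Ioo (0:ℝ) 1) :
    (s:ℂ)^u * (1 - (s:ℂ))^v = u * incBeta s u (v+1) - v * incBeta s (u+1) v := by
  have hu' : 0 < (u+1).re := by rw [add_re, one_re]; positivity
  have hv' : 0 < (v+1).re := by rw [add_re, one_re]; positivity
  set F : ℝ → ℂ := fun x => (x : ℂ) ^ u * (1 - (x : ℂ)) ^ v with hF
  have hc : ContinuousOn F (Icc 0 s) := by
    refine (continuousOn_of_forall_continuousAt fun x hx => ?_).mul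
        (continuousOn_of_forall_continuousAt fun x hx => ?_)
    · refine (continuousAt_cpow_const_of_re_pos (Or.inl ?_) hu).comp
        Complex.continuous_ofReal.continuousAt
      rw [ofReal_re]; exact hx.1
    · refine (continuousAt_cpow_const_of_re_pos (Or.inl ?_) hv).comp
        (continuous_const.sub Complex.continuous_ofReal).continuousAt
      rw [sub_re, one_re, ofReal_re, sub_nonneg]
      exact le_trans hx.2 hs.2.le
  have hder : ∀ x : ℝ, x ∈ Ioo (0 : ℝ) s →
      HasDerivAt F (u * ((x : ℂ) ^ (u - 1) * (1 - (x : ℂ)) ^ v) -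
        v * ((x : ℂ) ^ u * (1 - (x : ℂ)) ^ (v - 1))) x := by
    intro x hx
    have hx' : x ∈ Ioo (0:ℝ) 1 := ⟨hx.1, lt_trans hx.2 hs.2⟩
    have U : HasDerivAt (fun y : ℂ => y ^ u) (u * (x : ℂ) ^ (u - 1)) ↑x := by
      have := @HasDerivAt.cpow_const _ _ _ u (hasDerivAt_id (x : ℂ)) (Or.inl (by simpa using hx'.1))
      simpa using this
    have V : HasDerivAt (fun y : ℂ => (1 - y) ^ v) (-v * (1 - (x : ℂ)) ^ (v - 1)) ↑x := by
      have A := @HasDerivAt.cpow_const _ _ _ v (hasDerivAt_id (1 - (x : ℂ)))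
        (Or.inl (by simp [Complex.sub_re]; linarith [hx'.2]))
      simp_rw [id] at A
      have B : HasDerivAt (fun y : ℂ => 1 - y) (-1) ↑x := (hasDerivAt_id _).const_sub 1
      have C : HasDerivAt (fun y : ℂ => (1 - y) ^ v) (v * (1 - (x:ℂ)) ^ (v - 1) * 1 * -1) ↑x :=
        A.comp (x:ℂ) B
      exact C.congr_deriv (by ring)
    convert (U.mul V).comp_ofReal using 1
    · rfl
    ring
  have h1 : IntervalIntegrable (fun x : ℝ => (x:ℂ)^(u-1)*(1-(x:ℂ))^v) volume 0 s := by
    simpa using auxInt hu hv' hs.1.le hs.2.le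
  have h2 : IntervalIntegrable (fun x : ℝ => (x:ℂ)^u*(1-(x:ℂ))^(v-1)) volume 0 s := by
    simpa using auxInt hu' hv hs.1.le hs.2.le
  have h_int := (h1.const_mul u).sub (h2.const_mul v)
  have int_ev := intervalIntegral.integral_eq_sub_of_hasDerivAt_of_le hs.1.le hc hder h_int
  have hu0 : u ≠ 0 := fun h => by simp [h] at hu
  have hF0 : F 0 = 0 := by simp [hF, Complex.zero_cpow hu0]
  rw [hF0, sub_zero] at int_ev
  rw [intervalIntegral.integral_sub (h1.const_mul u) (h2.const_mul v),
    intervalIntegral.integral_const_mul, intervalIntegral.integral_const_mul] at int_ev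
  rw [show (s:ℂ)^u*(1-(s:ℂ))^v = F s from rfl, ← int_ev]
  simp only [incBeta, add_sub_cancel_right]

/-- Gamma shift by a natural number. -/
lemma auxGamma (z : ℂ) (hz : 0 < z.re) (n : ℕ) :
    Complex.Gamma (z + n) = (∏ i ∈ Finset.range n, (z + i)) * Complex.Gamma z := by
  induction n with
  | zero => simp
  | succ k ih =>
    have hpos : 0 < (z + (k:ℂ)).re := by
      rw [Complex.add_re, Complex.natCast_re]; positivity
    have hne : z + (k:ℂ) ≠ 0 := fun h => by simp [h] at hpos
    have : (z + (k+1:ℕ) : ℂ) = (z + k) + 1 := by push_cast; ring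
    rw [this, Complex.Gamma_add_one _ hne, ih, Finset.prod_range_succ]
    ring

lemma mainEqOn (b c : ℂ) (n : ℕ) (hb : 0 < b.re) (hbc : b.re < c.re) :
    ∀ k, k ≤ n → Set.EqOn
      (iteratedDeriv k (fun s : ℝ => (s:ℂ)^(-b) * incBeta s b (c - b + n)))
      (fun s : ℝ => ((-1:ℂ)^k * ∏ j ∈ Finset.range k, (c - b + n - 1 - j)) *
        ((s:ℂ)^(-(b + k)) * incBeta s (b + k) (c - b + n - k))) (Set.Ioo 0 1) := by
  have hcb : 0 < (c - b).re := by simp only [Complex.sub_re]; linarith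
  intro k
  induction k with
  | zero => intro _ s hs; simp
  | succ k IH =>
    intro hk1 s hs
    have hk : k ≤ n := le_trans (Nat.le_succ k) hk1
    have hkn : (k:ℝ) + 1 ≤ (n:ℝ) := by exact_mod_cast hk1
    have hne : (s:ℂ) ≠ 0 := Complex.ofReal_ne_zero.mpr hs.1.ne'
    have hbk : 0 < (b + (k:ℂ)).re := by
      rw [Complex.add_re, Complex.natCast_re]; positivity
    have hzk : 0 < (c - b + (n:ℂ) - (k:ℂ)).re := by
      simp only [Complex.sub_re, Complex.add_re, Complex.natCast_re]; linarith
    have hv : 0 < (c - b + (n:ℂ) - (k:ℂ) - 1).re := by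
      simp only [Complex.sub_re, Complex.add_re, Complex.natCast_re, Complex.one_re]; linarith
    set Pk : ℂ := ∏ j ∈ Finset.range k, (c - b + n - 1 - j) with hPk
    have hder : HasDerivAt
        (fun r : ℝ => ((-1:ℂ)^k * Pk) * ((r:ℂ)^(-(b + (k:ℂ))) * incBeta r (b + k) (c - b + n - k)))
        (((-1:ℂ)^k * Pk) * ((-(b + (k:ℂ)) * (s:ℂ)^(-(b + (k:ℂ)) - 1)) * incBeta s (b + k) (c - b + n - k)
          + (s:ℂ)^(-(b + (k:ℂ))) * ((s:ℂ)^(b + (k:ℂ) - 1) * (1 - (s:ℂ))^(c - b + (n:ℂ) - (k:ℂ) - 1)))) s := by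
      exact ((auxCpow (-(b + (k:ℂ))) hs.1).mul (auxFTC hbk hzk hs)).const_mul _
    have IBP := auxIBP hbk hv hs
    rw [show c - b + (n:ℂ) - (k:ℂ) - 1 + 1 = c - b + n - k from by ring] at IBP
    have heq : iteratedDeriv (k+1) (fun s : ℝ => (s:ℂ)^(-b) * incBeta s b (c - b + n)) s
        = ((-1:ℂ)^k * Pk) * ((-(b + (k:ℂ)) * (s:ℂ)^(-(b + (k:ℂ)) - 1)) * incBeta s (b + k) (c - b + n - k)
          + (s:ℂ)^(-(b + (k:ℂ))) * ((s:ℂ)^(b + (k:ℂ) - 1) * (1 - (s:ℂ))^(c - b + (n:ℂ) - (k:ℂ) - 1))) := by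
      rw [iteratedDeriv_succ]
      have hev : iteratedDeriv k (fun s : ℝ => (s:ℂ)^(-b) * incBeta s b (c - b + n))
          =ᶠ[nhds s] (fun s : ℝ => ((-1:ℂ)^k * Pk) *
            ((s:ℂ)^(-(b + k)) * incBeta s (b + k) (c - b + n - k))) :=
        Filter.eventuallyEq_of_mem (isOpen_Ioo.mem_nhds hs) (IH hk)
      rw [hev.deriv_eq, hder.deriv]
    rw [heq]
    -- now algebra
    have e1 : (s:ℂ)^(-(b + (k:ℂ)) - 1) = (s:ℂ)^(-(b + (k:ℂ))) * (s:ℂ)^(-1:ℂ) := by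
      rw [show -(b + (k:ℂ)) - 1 = -(b + (k:ℂ)) + (-1) from by ring, Complex.cpow_add _ _ hne]
    have e2 : (s:ℂ)^(b + (k:ℂ) - 1) = (s:ℂ)^(b + (k:ℂ)) * (s:ℂ)^(-1:ℂ) := by
      rw [show b + (k:ℂ) - 1 = b + (k:ℂ) + (-1) from by ring, Complex.cpow_add _ _ hne]
    have eAB : (s:ℂ)^(-(b + (k:ℂ))) * (s:ℂ)^(b + (k:ℂ)) = 1 := by
      rw [← Complex.cpow_add _ _ hne,
        show -(b + (k:ℂ)) + (b + (k:ℂ)) = 0 from by ring, Complex.cpow_zero]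
    have e3 : (s:ℂ)^(-(b + ((k:ℕ)+1:ℕ))) = (s:ℂ)^(-(b + (k:ℂ))) * (s:ℂ)^(-1:ℂ) := by
      rw [show -(b + (((k:ℕ)+1:ℕ)):ℂ) = -(b + (k:ℂ)) + (-1) from by push_cast; ring,
        Complex.cpow_add _ _ hne]
    have eArg1 : b + (((k:ℕ)+1:ℕ):ℂ) = b + (k:ℂ) + 1 := by push_cast; ring
    have eArg2 : c - b + (n:ℂ) - (((k:ℕ)+1:ℕ):ℂ) = c - b + (n:ℂ) - (k:ℂ) - 1 := by push_cast; ring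
    beta_reduce
    rw [e3, eArg1, eArg2, Finset.prod_range_succ, ← hPk]
    rw [e1, e2]
    push_cast
    linear_combination ((-1:ℂ)^k * Pk * (s:ℂ)^(-(b + (k:ℂ))) * (s:ℂ)^(-1:ℂ)) * IBP

theorem stmt4' (b c : ℂ) (n : ℕ) (hn : 1 ≤ n) (y : ℝ) (hy0 : 0 < y) (hy1 : y < 1)
    (hb : 0 < b.re) (hbc : b.re < c.re) :
    (incBeta y (b + n) (c - b) / Complex.betaIntegral b (c - b)) = ((-1 : ℂ)^n * Complex.Gamma c /
        (Complex.Gamma (c - b + n) * Complex.Gamma b)) * (y:ℂ)^(b + n) *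
      iteratedDeriv n (fun s : ℝ => (s:ℂ)^(-b) * incBeta s b (c - b + n)) y := by
  have hcb : 0 < (c - b).re := by simp only [Complex.sub_re]; linarith
  have hc : 0 < c.re := lt_trans hb hbc
  have hne : (y:ℂ) ≠ 0 := Complex.ofReal_ne_zero.mpr hy0.ne'
  have heq := mainEqOn b c n hb hbc n le_rfl (Set.mem_Ioo.mpr ⟨hy0, hy1⟩)
  rw [show c - b + (n:ℂ) - (n:ℂ) = c - b from by ring] at heq
  have hprod : (∏ j ∈ Finset.range n, (c - b + (n:ℂ) - 1 - (j:ℂ)))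
      = ∏ i ∈ Finset.range n, (c - b + (i:ℂ)) := by
    rw [← Finset.prod_range_reflect (fun i => c - b + (i:ℂ)) n]
    refine Finset.prod_congr rfl fun j hj => ?_
    have hjn : j < n := Finset.mem_range.mp hj
    have h2 : n - 1 - j = n - (1 + j) := by omega
    have : ((n - 1 - j : ℕ) : ℂ) = (n:ℂ) - 1 - (j:ℂ) := by
      rw [h2, Nat.cast_sub (by omega : 1 + j ≤ n)]; push_cast; ring
    rw [this]; ring
  rw [hprod] at heq
  rw [heq]
  set P : ℂ := ∏ i ∈ Finset.range n, (c - b + (i:ℂ)) with hPdef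
  have hGb : Complex.Gamma b ≠ 0 := Complex.Gamma_ne_zero_of_re_pos hb
  have hGcb : Complex.Gamma (c - b) ≠ 0 := Complex.Gamma_ne_zero_of_re_pos hcb
  have hGcbn : Complex.Gamma (c - b + n) ≠ 0 := by
    apply Complex.Gamma_ne_zero_of_re_pos
    simp only [Complex.add_re, Complex.natCast_re]
    positivity
  have hbeta : Complex.Gamma b * Complex.Gamma (c - b)
      = Complex.Gamma c * Complex.betaIntegral b (c - b) := by
    have := Complex.Gamma_mul_Gamma_eq_betaIntegral hb hcb
    rwa [show b + (c - b) = c from by ring] at this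
  have hbeta_ne : Complex.betaIntegral b (c - b) ≠ 0 := by
    intro h
    rw [h, mul_zero] at hbeta
    exact (mul_ne_zero hGb hGcb) hbeta
  have hP : Complex.Gamma (c - b + n) = P * Complex.Gamma (c - b) := auxGamma _ hcb n
  have hy2 : (y:ℂ)^(b + (n:ℂ)) * (y:ℂ)^(-(b + (n:ℂ))) = 1 := by
    rw [← Complex.cpow_add _ _ hne,
      show b + (n:ℂ) + -(b + (n:ℂ)) = 0 from by ring, Complex.cpow_zero]
  have hsq : ((-1:ℂ))^n * (-1:ℂ)^n = 1 := by
    rw [← pow_add, ← two_mul, pow_mul]; norm_num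
  have hcoef : ((-1:ℂ)^n * Complex.Gamma c / (Complex.Gamma (c - b + n) * Complex.Gamma b))
      * ((-1:ℂ)^n * P) = 1 / Complex.betaIntegral b (c - b) := by
    rw [div_mul_eq_mul_div, div_eq_div_iff (mul_ne_zero hGcbn hGb) hbeta_ne]
    linear_combination (P * Complex.Gamma c * Complex.betaIntegral b (c - b)) * hsq
      - Complex.Gamma b * hP - P * hbeta
  beta_reduce
  symm
  calc ((-1 : ℂ)^n * Complex.Gamma c /
        (Complex.Gamma (c - b + n) * Complex.Gamma b)) * (y:ℂ)^(b + n) *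
      (((-1:ℂ)^n * P) * ((y:ℂ)^(-(b + (n:ℂ))) * incBeta y (b + n) (c - b)))
      = (((-1 : ℂ)^n * Complex.Gamma c / (Complex.Gamma (c - b + n) * Complex.Gamma b))
          * ((-1:ℂ)^n * P)) * (((y:ℂ)^(b + (n:ℂ)) * (y:ℂ)^(-(b + (n:ℂ)))) * incBeta y (b + n) (c - b)) := by
        ring
    _ = (1 / Complex.betaIntegral b (c - b)) * (1 * incBeta y (b + n) (c - b)) := by
        rw [hcoef, hy2]
    _ = incBeta y (b + n) (c - b) / Complex.betaIntegral b (c - b) := by ring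

end Aux

theorem stmt4 (b c : ℂ) (n : ℕ) (hn : 1 ≤ n) (y : ℝ) (hy0 : 0 < y) (hy1 : y < 1)
    (hb : 0 < b.re) (hbc : b.re < c.re) :
    ipochL b c y n = ((-1 : ℂ)^n * Complex.Gamma c /
        (Complex.Gamma (c - b + n) * Complex.Gamma b)) * (y:ℂ)^(b + n) *
      iteratedDeriv n (fun s : ℝ => (s:ℂ)^(-b) * incBeta s b (c - b + n)) y := by
  rw [ipochL]
  exact stmt4' b c n hn y hy0 hy1 hb hbc
end

section
/- For a positive integer k, Re(c-k) > Re(b) > 0 and |x| < 1: ∫_0^1 y^{k-1} ₂F₁(a,[b,c-k;y];x) dy = (1/k)[ ₂F₁(a,b;c-k;x) − (Γ(c-k)Γ(b+k)/(Γ(b)Γ(c))) ₂F₁(a,b+k;c;x) ]. -/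
open Complex

lemma Gamma_poch {a : ℂ} (ha : 0 < a.re) (n : ℕ) :
    Complex.Gamma (a + n) = poch a n * Complex.Gamma a := by
  induction n with
  | zero => simp [poch]
  | succ n ih =>
    have hne : a + n ≠ 0 := by
      intro h
      have := congrArg Complex.re h
      simp [Complex.add_re] at this
      have : (0:ℝ) ≤ (n:ℝ) := Nat.cast_nonneg n
      linarith [congrArg Complex.re h]
    have : a + (n+1 : ℕ) = (a + n) + 1 := by push_cast; ring
    rw [this, Complex.Gamma_add_one _ hne, ih, poch_succ]
    ring

lemma betaIntegral_eq {u v : ℂ} (hu : 0 < u.re) (hv : 0 < v.re) :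
    Complex.betaIntegral u v = Complex.Gamma u * Complex.Gamma v / Complex.Gamma (u + v) := by
  rw [Complex.Gamma_mul_Gamma_eq_betaIntegral hu hv]
  field_simp [Complex.Gamma_ne_zero_of_re_pos (show 0 < (u+v).re by simp [Complex.add_re]; positivity)]

lemma betaIntegral_ne_zero {u v : ℂ} (hu : 0 < u.re) (hv : 0 < v.re) :
    Complex.betaIntegral u v ≠ 0 := by
  rw [betaIntegral_eq hu hv]
  have h1 := Complex.Gamma_ne_zero_of_re_pos hu
  have h2 := Complex.Gamma_ne_zero_of_re_pos hv
  have h3 := Complex.Gamma_ne_zero_of_re_pos (show 0 < (u+v).re by simp [Complex.add_re]; positivity)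
  exact div_ne_zero (mul_ne_zero h1 h2) h3

lemma betaIntegral_shift {u v : ℂ} (hu : 0 < u.re) (hv : 0 < v.re) (n : ℕ) :
    Complex.betaIntegral (u + n) v =
      poch u n / poch (u + v) n * Complex.betaIntegral u v := by
  have hun : 0 < (u + n).re := by
    simp only [Complex.add_re, Complex.natCast_re]
    have : (0:ℝ) ≤ (n:ℝ) := Nat.cast_nonneg n
    linarith
  have huv : 0 < (u + v).re := by simp only [Complex.add_re]; linarith
  rw [betaIntegral_eq hun hv, betaIntegral_eq hu hv]
  have h1 : u + n + v = (u + v) + n := by ring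
  rw [h1, Gamma_poch hu n, Gamma_poch huv n]
  have g1 := Complex.Gamma_ne_zero_of_re_pos hu
  have g2 := Complex.Gamma_ne_zero_of_re_pos hv
  have g3 := Complex.Gamma_ne_zero_of_re_pos huv
  have p1 := poch_ne_zero huv n
  field_simp

lemma betaIntegrand_continuousAt {u v : ℂ} {y : ℝ} (hy : y ∈ Set.Ioo (0:ℝ) 1) :
    ContinuousAt (fun t : ℝ => (t:ℂ)^(u-1) * (1 - (t:ℂ))^(v-1)) y := by
  obtain ⟨hy0, hy1⟩ := hy
  have h1 : ContinuousAt (fun t : ℝ => (t:ℂ)^(u-1)) y :=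
    ContinuousAt.cpow Complex.continuous_ofReal.continuousAt continuousAt_const
      (Complex.ofReal_mem_slitPlane.2 hy0)
  have h2 : ContinuousAt (fun t : ℝ => (1 - (t:ℂ))^(v-1)) y := by
    have hb : (1 - (y:ℂ)) ∈ Complex.slitPlane := by
      have : (1 - (y:ℂ)) = ((1 - y : ℝ) : ℂ) := by push_cast; ring
      rw [this]
      exact Complex.ofReal_mem_slitPlane.2 (by linarith)
    exact ContinuousAt.cpow (continuous_const.sub Complex.continuous_ofReal).continuousAt
      continuousAt_const hb
  exact h1.mul h2

lemma incBeta_continuousOn {u v : ℂ} (hu : 0 < u.re) (hv : 0 < v.re) :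
    ContinuousOn (fun y : ℝ => incBeta y u v) (Set.Icc 0 1) := by
  have h := Complex.betaIntegral_convergent hu hv
  have h' : MeasureTheory.IntegrableOn
      (fun t : ℝ => (t:ℂ)^(u-1) * (1 - (t:ℂ))^(v-1)) (Set.uIcc (0:ℝ) 1) := by
    rw [Set.uIcc_of_le (by norm_num : (0:ℝ) ≤ 1)]
    exact (intervalIntegrable_iff_integrableOn_Icc_of_le (by norm_num)).1 h
  have := intervalIntegral.continuousOn_primitive_interval h'
  rwa [Set.uIcc_of_le (by norm_num : (0:ℝ) ≤ 1)] at this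

lemma incBeta_hasDerivAt {u v : ℂ} (hu : 0 < u.re) (hv : 0 < v.re) {y : ℝ}
    (hy : y ∈ Set.Ioo (0:ℝ) 1) :
    HasDerivAt (fun y : ℝ => incBeta y u v) ((y:ℂ)^(u-1) * (1 - (y:ℂ))^(v-1)) y := by
  apply intervalIntegral.integral_hasDerivAt_right
  · exact (Complex.betaIntegral_convergent hu hv).mono_set
      (by rw [Set.uIcc_of_le hy.1.le, Set.uIcc_of_le (by norm_num : (0:ℝ) ≤ 1)]
          exact Set.Icc_subset_Icc le_rfl hy.2.le)
  · exact ContinuousAt.stronglyMeasurableAtFilter isOpen_Ioo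
      (fun t ht => betaIntegrand_continuousAt ht) y hy
  · exact betaIntegrand_continuousAt hy

lemma incBeta_one (u v : ℂ) : incBeta 1 u v = Complex.betaIntegral u v := rfl

lemma incBeta_zero (u v : ℂ) : incBeta 0 u v = 0 := intervalIntegral.integral_same

lemma integral_pow_mul_incBeta {u v : ℂ} (hu : 0 < u.re) (hv : 0 < v.re) {k : ℕ} (hk : 1 ≤ k) :
    (∫ y in (0:ℝ)..1, (y:ℂ)^(k-1) * incBeta y u v)
      = ((k:ℂ))⁻¹ * (Complex.betaIntegral u v - Complex.betaIntegral (u + k) v) := by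
  have hk0 : ((k:ℂ)) ≠ 0 := Nat.cast_ne_zero.2 (by omega)
  have hu' : 0 < (u + k).re := by
    simp only [Complex.add_re, Complex.natCast_re]
    have : (0:ℝ) ≤ (k:ℝ) := Nat.cast_nonneg k
    linarith
  set H : ℝ → ℂ := fun y => ((y:ℂ)^k / k) * incBeta y u v - ((k:ℂ))⁻¹ * incBeta y (u+k) v with hH
  have hcont : ContinuousOn H (Set.Icc (0:ℝ) 1) := by
    apply ContinuousOn.sub
    · exact ((Complex.continuous_ofReal.pow k).continuousOn.div_const _).mul
        (incBeta_continuousOn hu hv)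
    · exact (incBeta_continuousOn hu' hv).const_smul ((k:ℂ))⁻¹ |>.congr (fun y _ => by simp [smul_eq_mul])
  have hderiv : ∀ y ∈ Set.Ioo (0:ℝ) 1,
      HasDerivWithinAt H ((y:ℂ)^(k-1) * incBeta y u v) (Set.Ioi y) y := by
    intro y hy
    have hy0 : (0:ℝ) < y := hy.1
    have hyC : (y:ℂ) ≠ 0 := by exact_mod_cast hy0.ne'
    have h1 : HasDerivAt (fun y : ℝ => (y:ℂ)^k) ((k:ℂ) * (y:ℂ)^(k-1)) y :=
      (hasDerivAt_pow k ((y:ℂ))).comp_ofReal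
    have h2 := incBeta_hasDerivAt hu hv hy
    have h3 := incBeta_hasDerivAt hu' hv hy
    have hprod := ((h1.div_const (k:ℂ)).mul h2).sub (h3.const_mul ((k:ℂ))⁻¹)
    have key : (k:ℂ) * (y:ℂ)^(k-1) / (k:ℂ) * incBeta y u v
        + (y:ℂ)^k / (k:ℂ) * ((y:ℂ)^(u-1) * (1 - (y:ℂ))^(v-1))
        - ((k:ℂ))⁻¹ * ((y:ℂ)^(u+(k:ℂ)-1) * (1 - (y:ℂ))^(v-1))
        = (y:ℂ)^(k-1) * incBeta y u v := by
      have hpow : (y:ℂ)^(u+(k:ℂ)-1) = (y:ℂ)^(u-1) * (y:ℂ)^k := by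
        rw [← Complex.cpow_natCast (y:ℂ) k, ← Complex.cpow_add _ _ hyC]
        ring_nf
      rw [hpow]
      field_simp
      ring
    rw [← key]
    exact hprod.hasDerivWithinAt
  have hint : IntervalIntegrable (fun y : ℝ => (y:ℂ)^(k-1) * incBeta y u v)
      MeasureTheory.volume 0 1 := by
    apply ContinuousOn.intervalIntegrable
    rw [Set.uIcc_of_le (by norm_num : (0:ℝ) ≤ 1)]
    exact ((Complex.continuous_ofReal.pow (k-1)).continuousOn).mul (incBeta_continuousOn hu hv)
  have := intervalIntegral.integral_eq_sub_of_hasDeriv_right_of_le (by norm_num : (0:ℝ) ≤ 1)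
    hcont hderiv hint
  rw [this, hH]
  simp only [Complex.ofReal_one, Complex.ofReal_zero, one_pow, incBeta_one, incBeta_zero,
    zero_pow (by omega : k ≠ 0), mul_zero, zero_div, zero_mul, sub_zero]
  field_simp

noncomputable def Bnd (u v : ℂ) : ℝ :=
  ∫ t in (0:ℝ)..1, ‖(t:ℂ)^(((u.re:ℝ):ℂ)-1) * (1-(t:ℂ))^(((v.re:ℝ):ℂ)-1)‖

lemma Bnd_integrand_intInt {u v : ℂ} (hu : 0 < u.re) (hv : 0 < v.re) :
    IntervalIntegrable (fun t : ℝ => ‖(t:ℂ)^(((u.re:ℝ):ℂ)-1) * (1-(t:ℂ))^(((v.re:ℝ):ℂ)-1)‖)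
      MeasureTheory.volume 0 1 :=
  (Complex.betaIntegral_convergent (by simpa using hu) (by simpa using hv)).norm

lemma incBeta_norm_le {u v : ℂ} (hu : 0 < u.re) (hv : 0 < v.re) {y : ℝ}
    (hy0 : 0 ≤ y) (hy1 : y ≤ 1) (n : ℕ) :
    ‖incBeta y (u + n) v‖ ≤ Bnd u v := by
  have hgi : IntervalIntegrable (fun t : ℝ =>
      ‖(t:ℂ)^(((u.re:ℝ):ℂ)-1) * (1-(t:ℂ))^(((v.re:ℝ):ℂ)-1)‖) MeasureTheory.volume 0 y :=
    (Bnd_integrand_intInt hu hv).mono_set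
      (by rw [Set.uIcc_of_le hy0, Set.uIcc_of_le (by norm_num : (0:ℝ) ≤ 1)]
          exact Set.Icc_subset_Icc le_rfl hy1)
  have hne : ∀ᵐ t : ℝ ∂MeasureTheory.volume, t ≠ (1:ℝ) := by
    have hs : {t : ℝ | ¬ t ≠ 1} = {1} := by ext t; simp
    rw [MeasureTheory.ae_iff, hs]
    exact Real.volume_singleton
  have hbound : ∀ᵐ t : ℝ ∂MeasureTheory.volume.restrict (Set.uIoc (0:ℝ) y),
      ‖(t:ℂ)^(u + n - 1) * (1-(t:ℂ))^(v-1)‖ ≤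
        ‖(t:ℂ)^(((u.re:ℝ):ℂ)-1) * (1-(t:ℂ))^(((v.re:ℝ):ℂ)-1)‖ := by
    rw [Set.uIoc_of_le hy0]
    filter_upwards [MeasureTheory.ae_restrict_mem measurableSet_Ioc,
      MeasureTheory.ae_restrict_of_ae hne] with t ht htne
    have ht0 : 0 < t := ht.1
    have ht1 : t < 1 := lt_of_le_of_ne (ht.2.trans hy1) htne
    have h1t : 0 < 1 - t := by linarith
    have e1 : (1 : ℂ) - (t:ℂ) = ((1 - t : ℝ) : ℂ) := by push_cast; ring
    rw [norm_mul, norm_mul, e1,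
      Complex.norm_cpow_eq_rpow_re_of_pos ht0, Complex.norm_cpow_eq_rpow_re_of_pos h1t,
      Complex.norm_cpow_eq_rpow_re_of_pos ht0, Complex.norm_cpow_eq_rpow_re_of_pos h1t]
    have hre1 : (u + (n:ℂ) - 1).re = u.re + n - 1 := by
      simp [Complex.sub_re, Complex.add_re]
    have hre2 : (((u.re:ℝ):ℂ)-1).re = u.re - 1 := by simp
    have hre3 : (v - 1).re = v.re - 1 := by simp [Complex.sub_re]
    have hre4 : ((((v.re:ℝ):ℂ))-1).re = v.re - 1 := by simp
    rw [hre1, hre2, hre3, hre4]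
    apply mul_le_mul_of_nonneg_right _ (Real.rpow_nonneg h1t.le _)
    apply Real.rpow_le_rpow_of_exponent_ge ht0 ht1.le
    have : (0:ℝ) ≤ (n:ℝ) := Nat.cast_nonneg n
    linarith
  have h1 : ‖incBeta y (u + n) v‖ ≤
      |∫ t in (0:ℝ)..y, ‖(t:ℂ)^(((u.re:ℝ):ℂ)-1) * (1-(t:ℂ))^(((v.re:ℝ):ℂ)-1)‖| :=
    intervalIntegral.norm_integral_le_abs_of_norm_le hbound hgi
  have h2 : (∫ t in (0:ℝ)..y, ‖(t:ℂ)^(((u.re:ℝ):ℂ)-1) * (1-(t:ℂ))^(((v.re:ℝ):ℂ)-1)‖)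
      ≤ Bnd u v := by
    apply intervalIntegral.integral_mono_interval le_rfl hy0 hy1
    · filter_upwards with t using norm_nonneg _
    · exact Bnd_integrand_intInt hu hv
  have h3 : (0:ℝ) ≤ ∫ t in (0:ℝ)..y, ‖(t:ℂ)^(((u.re:ℝ):ℂ)-1) * (1-(t:ℂ))^(((v.re:ℝ):ℂ)-1)‖ := by
    apply intervalIntegral.integral_nonneg hy0
    intro t _; exact norm_nonneg _
  calc ‖incBeta y (u + n) v‖ ≤ _ := h1
    _ ≤ Bnd u v := by rwa [_root_.abs_of_nonneg h3]

lemma summable_poch_geom (a : ℂ) {x : ℂ} (hx : ‖x‖ < 1) :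
    Summable (fun n : ℕ => ‖poch a n‖ * ‖x‖^n / (n.factorial : ℝ)) := by
  set r : ℝ := (1 + ‖x‖)/2 with hr
  have hxn : ‖x‖ = ‖x‖ := rfl
  have hx0 : (0:ℝ) ≤ ‖x‖ := norm_nonneg x
  have hxr : ‖x‖ < r := by rw [hr, hxn]; linarith
  have hr1 : r < 1 := by rw [hr, hxn]; linarith
  have hr0 : 0 < r := by rw [hr]; linarith
  apply summable_of_ratio_norm_eventually_le hr1
  rw [Filter.eventually_atTop]
  refine ⟨Nat.ceil ((‖a‖ * ‖x‖)/(r - ‖x‖)) + 1, fun n hn => ?_⟩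
  set f : ℕ → ℝ := fun n => ‖poch a n‖ * ‖x‖^n / (n.factorial : ℝ) with hf
  have hfn : ∀ m, 0 ≤ f m := fun m => by positivity
  have hfsucc : f (n+1) = f n * (‖a + n‖ * ‖x‖ / (n+1)) := by
    rw [hf]
    simp only [poch_succ, norm_mul, pow_succ, Nat.factorial_succ, Nat.cast_mul, Nat.cast_add,
      Nat.cast_one]
    field_simp
  have key : ‖a + n‖ * ‖x‖ / (n+1) ≤ r := by
    have h1 : ‖a + (n:ℂ)‖ ≤ ‖a‖ + n := by
      calc ‖a + (n:ℂ)‖ ≤ ‖a‖ + ‖(n:ℂ)‖ := norm_add_le _ _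
        _ = ‖a‖ + n := by simp
    have hn' : (‖a‖ * ‖x‖)/(r - ‖x‖) ≤ (n:ℝ) := by
      have := Nat.ceil_le.1 (le_refl (Nat.ceil ((‖a‖ * ‖x‖)/(r - ‖x‖))))
      calc (‖a‖ * ‖x‖)/(r - ‖x‖) ≤ (Nat.ceil ((‖a‖ * ‖x‖)/(r - ‖x‖)) : ℝ) := Nat.le_ceil _
        _ ≤ (n:ℝ) := by exact_mod_cast Nat.le_of_succ_le hn
    have hrx : 0 < r - ‖x‖ := by linarith
    have h2 : ‖a‖ * ‖x‖ ≤ (n:ℝ) * (r - ‖x‖) := by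
      rw [div_le_iff₀ hrx] at hn'
      linarith
    rw [div_le_iff₀ (by positivity : (0:ℝ) < (n:ℝ)+1)]
    have : ‖a + (n:ℂ)‖ * ‖x‖ ≤ (‖a‖ + n) * ‖x‖ := mul_le_mul_of_nonneg_right h1 hx0
    nlinarith [mul_nonneg (norm_nonneg a) hx0]
  calc ‖f (n+1)‖ = f (n+1) := Real.norm_of_nonneg (hfn _)
    _ = f n * (‖a + n‖ * ‖x‖ / (n+1)) := hfsucc
    _ ≤ f n * r := mul_le_mul_of_nonneg_left key (hfn n)
    _ = r * ‖f n‖ := by rw [Real.norm_of_nonneg (hfn n)]; ring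

lemma poch_ratio_eq {b c : ℂ} (hb : 0 < b.re) (hbc : b.re < c.re) (n : ℕ) :
    poch b n / poch c n =
      Complex.betaIntegral (b + n) (c - b) / Complex.betaIntegral b (c - b) := by
  have hκ : 0 < (c - b).re := by simp [Complex.sub_re]; linarith
  have hB := betaIntegral_ne_zero hb hκ
  have hbc' : b + (c - b) = c := by ring
  rw [betaIntegral_shift hb hκ n, hbc', mul_div_assoc, div_self hB, mul_one]

lemma norm_poch_ratio_le {b c : ℂ} (hb : 0 < b.re) (hbc : b.re < c.re) (n : ℕ) :
    ‖poch b n / poch c n‖ ≤ Bnd b (c - b) / ‖Complex.betaIntegral b (c - b)‖ := by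
  have hκ : 0 < (c - b).re := by simp [Complex.sub_re]; linarith
  have hB := betaIntegral_ne_zero hb hκ
  rw [poch_ratio_eq hb hbc n, norm_div]
  have hBpos : 0 < ‖Complex.betaIntegral b (c - b)‖ := norm_pos_iff.2 hB
  gcongr
  rw [← incBeta_one]
  exact incBeta_norm_le hb hκ zero_le_one le_rfl n

lemma summable_hyp (a : ℂ) {b c x : ℂ} (hb : 0 < b.re) (hbc : b.re < c.re)
    (hx : ‖x‖ < 1) :
    Summable (fun n : ℕ => poch a n * poch b n / poch c n * x^n / (n.factorial : ℂ)) := by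
  apply Summable.of_norm_bounded
    (g := fun n => (Bnd b (c - b) / ‖Complex.betaIntegral b (c - b)‖) *
      (‖poch a n‖ * ‖x‖^n / (n.factorial : ℝ)))
    ((summable_poch_geom a hx).mul_left _)
  intro n
  have h1 : poch a n * poch b n / poch c n * x^n / (n.factorial : ℂ)
      = (poch b n / poch c n) * (poch a n * x^n / (n.factorial : ℂ)) := by ring
  rw [h1, norm_mul]
  have h2 : ‖poch a n * x^n / (n.factorial : ℂ)‖ = ‖poch a n‖ * ‖x‖^n / (n.factorial : ℝ) := by
    rw [norm_div, norm_mul, norm_pow]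
    simp
  rw [h2]
  exact mul_le_mul_of_nonneg_right (norm_poch_ratio_le hb hbc n) (by positivity)

lemma re_add_nat_pos {u : ℂ} (hu : 0 < u.re) (n : ℕ) : 0 < (u + n).re := by
  simp only [Complex.add_re, Complex.natCast_re]
  have : (0:ℝ) ≤ (n:ℝ) := Nat.cast_nonneg n
  linarith

lemma betaIntegral_bk {b c : ℂ} (k : ℕ) (hb : 0 < b.re) (hbk : 0 < (b + k).re)
    (hκ : 0 < ((c - k) - b).re) (hc' : 0 < (c - k).re) (hc : 0 < c.re) :
    Complex.betaIntegral (b + k) ((c - k) - b) =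
      (Complex.Gamma (c - k) * Complex.Gamma (b + k) / (Complex.Gamma b * Complex.Gamma c)) *
        Complex.betaIntegral b ((c - k) - b) := by
  have e1 : b + (k:ℂ) + ((c - k) - b) = c := by ring
  have e2 : b + ((c - k) - b) = c - k := by ring
  rw [betaIntegral_eq hbk hκ, betaIntegral_eq hb hκ, e1, e2]
  have g1 := Complex.Gamma_ne_zero_of_re_pos hb
  have g2 := Complex.Gamma_ne_zero_of_re_pos hκ
  have g3 := Complex.Gamma_ne_zero_of_re_pos hc
  have g4 := Complex.Gamma_ne_zero_of_re_pos hc'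
  have g5 := Complex.Gamma_ne_zero_of_re_pos hbk
  field_simp

theorem stmt9 (a b c : ℂ) (x : ℂ) (k : ℕ) (hk : 1 ≤ k)
    (hb : 0 < b.re) (hbc : b.re < (c - k).re) (hx : ‖x‖ < 1) :
    (∫ y in (0:ℝ)..1, (y:ℂ)^(k - 1) * inc2F1L a b (c - k) y x) =
      (1 / (k:ℂ)) * (hyp2F1 a b (c - k) x -
        (Complex.Gamma (c - k) * Complex.Gamma (b + k) /
          (Complex.Gamma b * Complex.Gamma c)) * hyp2F1 a (b + k) c x) := by
  have hcre : (c - (k:ℂ)).re = c.re - k := by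
    simp [Complex.sub_re]
  have hκ : 0 < ((c - k) - b).re := by
    have h := hbc; rw [hcre] at h
    simp only [Complex.sub_re, Complex.natCast_re]
    linarith
  have hc' : 0 < (c - (k:ℂ)).re := lt_trans hb hbc
  have hbk : 0 < (b + (k:ℂ)).re := re_add_nat_pos hb k
  have hbkc : (b + (k:ℂ)).re < c.re := by
    simp only [Complex.add_re, Complex.natCast_re]
    rw [hcre] at hbc
    linarith
  have hc : 0 < c.re := lt_trans hbk hbkc
  have hB : Complex.betaIntegral b ((c - k) - b) ≠ 0 := betaIntegral_ne_zero hb hκ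
  have hBpos : 0 < ‖Complex.betaIntegral b ((c - k) - b)‖ := norm_pos_iff.2 hB
  set C : ℂ := Complex.Gamma (c - k) * Complex.Gamma (b + k) /
      (Complex.Gamma b * Complex.Gamma c) with hC
  set B : ℂ := Complex.betaIntegral b ((c - k) - b) with hBdef
  set F : ℕ → ℝ → ℂ := fun n y =>
    (y:ℂ)^(k - 1) * (poch a n * (incBeta y (b + n) ((c - k) - b) / B) * x^n /
      (n.factorial : ℂ)) with hF
  -- the integrand equals the pointwise tsum of F
  have hpt : ∀ y : ℝ, (y:ℂ)^(k - 1) * inc2F1L a b (c - k) y x = ∑' n, F n y := by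
    intro y
    rw [inc2F1L, ← tsum_mul_left]
    refine tsum_congr fun n => ?_
    simp only [hF, ipochL, ← hBdef]
  -- integrability of each F n
  have hFint : ∀ n, MeasureTheory.IntegrableOn (F n) (Set.Ioc (0:ℝ) 1) := by
    intro n
    have hco : ContinuousOn (F n) (Set.Icc 0 1) := by
      apply ContinuousOn.mul
      · exact (Complex.continuous_ofReal.pow (k-1)).continuousOn
      · exact ((continuousOn_const.mul
          ((incBeta_continuousOn (re_add_nat_pos hb n) hκ).div_const B)).mul
            continuousOn_const).div_const _
    exact (hco.integrableOn_Icc).mono_set Set.Ioc_subset_Icc_self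
  -- uniform bound on the norms
  have hCn : ∀ n, ∀ y ∈ Set.Ioc (0:ℝ) 1, ‖F n y‖ ≤
      (Bnd b ((c - k) - b) / ‖B‖) * (‖poch a n‖ * ‖x‖^n / (n.factorial : ℝ)) := by
    intro n y hy
    rw [hF]
    simp only
    rw [norm_mul]
    have h1 : ‖(y:ℂ)^(k-1)‖ ≤ 1 := by
      rw [norm_pow, Complex.norm_real, Real.norm_of_nonneg hy.1.le]
      exact pow_le_one₀ hy.1.le hy.2
    have h2 : ‖poch a n * (incBeta y (b + n) ((c - k) - b) / B) * x^n / (n.factorial : ℂ)‖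
        ≤ (Bnd b ((c - k) - b) / ‖B‖) * (‖poch a n‖ * ‖x‖^n / (n.factorial : ℝ)) := by
      rw [norm_div, norm_mul, norm_mul, norm_div, norm_pow]
      have h3 : ‖incBeta y (b + n) ((c - k) - b)‖ ≤ Bnd b ((c - k) - b) :=
        incBeta_norm_le hb hκ hy.1.le hy.2 n
      have h4 : ‖((n.factorial : ℂ))‖ = (n.factorial : ℝ) := by
        rw [Complex.norm_natCast]
      rw [h4]
      have hre : ‖poch a n‖ * (‖incBeta y (b + n) ((c - k) - b)‖ / ‖B‖) * ‖x‖^n /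
            (n.factorial : ℝ)
          = (‖incBeta y (b + n) ((c - k) - b)‖ / ‖B‖) *
            (‖poch a n‖ * ‖x‖^n / (n.factorial : ℝ)) := by ring
      rw [hre]
      gcongr
    calc ‖(y:ℂ)^(k-1)‖ * ‖poch a n * (incBeta y (b + n) ((c-k) - b) / B) * x^n /
          (n.factorial : ℂ)‖
        ≤ 1 * ((Bnd b ((c - k) - b) / ‖B‖) * (‖poch a n‖ * ‖x‖^n / (n.factorial : ℝ))) :=
          mul_le_mul h1 h2 (norm_nonneg _) zero_le_one
      _ = _ := one_mul _
  -- summability of the integrals of norms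
  have hFsum : Summable (fun n => ∫ y in Set.Ioc (0:ℝ) 1, ‖F n y‖) := by
    apply Summable.of_nonneg_of_le
      (fun n => MeasureTheory.integral_nonneg (fun y => norm_nonneg _))
      (fun n => ?_)
      (((summable_poch_geom a hx).mul_left (Bnd b ((c - k) - b) / ‖B‖)))
    have step : (∫ y in Set.Ioc (0:ℝ) 1, ‖F n y‖) ≤
        ∫ _y in Set.Ioc (0:ℝ) 1,
          (Bnd b ((c - k) - b) / ‖B‖) * (‖poch a n‖ * ‖x‖^n / (n.factorial : ℝ)) := by
      apply MeasureTheory.setIntegral_mono_on ((hFint n).norm)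
        (MeasureTheory.integrableOn_const (by simp))
        measurableSet_Ioc
      exact hCn n
    calc (∫ y in Set.Ioc (0:ℝ) 1, ‖F n y‖) ≤ _ := step
      _ = (Bnd b ((c - k) - b) / ‖B‖) * (‖poch a n‖ * ‖x‖^n / (n.factorial : ℝ)) := by
        rw [MeasureTheory.setIntegral_const]
        simp [Real.volume_Ioc]
  -- swap integral and sum
  have hswap : (∫ y in (0:ℝ)..1, (y:ℂ)^(k - 1) * inc2F1L a b (c - k) y x)
      = ∑' n, ∫ y in (0:ℝ)..1, F n y := by
    rw [intervalIntegral.integral_congr (fun y _ => hpt y)]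
    rw [intervalIntegral.integral_of_le zero_le_one]
    rw [← MeasureTheory.integral_tsum_of_summable_integral_norm hFint hFsum]
    congr 1
    funext n
    rw [intervalIntegral.integral_of_le zero_le_one]
  -- evaluate each integral
  have hval : ∀ n : ℕ, (∫ y in (0:ℝ)..1, F n y)
      = ((k:ℂ))⁻¹ * ((poch a n * poch b n / poch (c - k) n * x^n / (n.factorial : ℂ))
        - C * (poch a n * poch (b + k) n / poch c n * x^n / (n.factorial : ℂ))) := by
    intro n
    have hbn : 0 < (b + (n:ℂ)).re := re_add_nat_pos hb n
    have hiso : ∀ y : ℝ, F n y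
        = (poch a n * x^n / (n.factorial : ℂ) / B) *
          ((y:ℂ)^(k-1) * incBeta y (b + n) ((c - k) - b)) := by
      intro y; rw [hF]; ring
    rw [intervalIntegral.integral_congr (fun y _ => hiso y),
      intervalIntegral.integral_const_mul, integral_pow_mul_incBeta hbn hκ hk]
    have e1 : Complex.betaIntegral (b + n) ((c - k) - b)
        = poch b n / poch (c - k) n * B := by
      rw [betaIntegral_shift hb hκ n]
      congr 2
      ring
    have e2 : Complex.betaIntegral (b + n + k) ((c - k) - b)
        = C * (poch (b + k) n / poch c n) * B := by
      have h5 : b + (n:ℂ) + (k:ℂ) = (b + k) + (n:ℂ) := by ring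
      rw [h5, betaIntegral_shift hbk hκ n]
      have h6 : b + (k:ℂ) + ((c - k) - b) = c := by ring
      rw [h6, betaIntegral_bk k hb hbk hκ hc' hc]
      ring
    rw [e1, e2]
    have hkC : ((k:ℂ)) ≠ 0 := Nat.cast_ne_zero.2 (by omega)
    have hpc : poch (c - k) n ≠ 0 := poch_ne_zero hc' n
    have hpc2 : poch c n ≠ 0 := poch_ne_zero hc n
    have hnf : ((n.factorial : ℂ)) ≠ 0 := Nat.cast_ne_zero.2 n.factorial_ne_zero
    field_simp
  rw [hswap, tsum_congr hval, tsum_mul_left, one_div]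
  congr 1
  have hu := summable_hyp a hb hbc hx
  have hv := summable_hyp a hbk hbkc hx
  rw [Summable.tsum_sub hu (hv.mul_left C), tsum_mul_left, hyp2F1, hyp2F1]
end

section
/- For Re(b) > Re(a) > 0 and 0 ≤ y < 1, the n-th derivative formula holds: (d^n/dx^n) ₁F₁([a,b;y];x) = ((a)_n / (b)_n) · ₁F₁([a+n,b+n;y];x). -/
open Complex
set_option maxHeartbeats 1000000

/- ## Auxiliary lemmas -/

lemma my_ne_zero_of_re_pos {s : ℂ} (hs : 0 < s.re) : s ≠ 0 := by
  intro h; rw [h] at hs; simp at hs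

lemma poch_ne_zero_s12 {b : ℂ} (hb : 0 < b.re) (n : ℕ) : poch b n ≠ 0 := by
  rw [poch, Finset.prod_ne_zero_iff]
  intro i _
  apply my_ne_zero_of_re_pos
  simp only [Complex.add_re, Complex.natCast_re]
  positivity

lemma beta_ne_zero {a b : ℂ} (ha : 0 < a.re) (hab : a.re < b.re) :
    Complex.betaIntegral a (b - a) ≠ 0 := by
  have hv : 0 < (b - a).re := by simp [Complex.sub_re]; linarith
  have h := Complex.Gamma_mul_Gamma_eq_betaIntegral ha hv
  have hba : a + (b - a) = b := by ring
  rw [hba] at h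
  intro h0
  rw [h0, mul_zero] at h
  exact mul_ne_zero (Complex.Gamma_ne_zero_of_re_pos ha)
    (Complex.Gamma_ne_zero_of_re_pos hv) h

lemma beta_shift {a b : ℂ} (ha : 0 < a.re) (hab : a.re < b.re) :
    Complex.betaIntegral (a + 1) (b - a) = a / b * Complex.betaIntegral a (b - a) := by
  have hv : 0 < (b - a).re := by simp [Complex.sub_re]; linarith
  have hb : 0 < b.re := lt_trans ha hab
  have ha1 : 0 < (a + 1).re := by simp [Complex.add_re]; linarith
  have h1 := Complex.Gamma_mul_Gamma_eq_betaIntegral ha hv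
  have h2 := Complex.Gamma_mul_Gamma_eq_betaIntegral ha1 hv
  have e1 : a + (b - a) = b := by ring
  have e2 : a + 1 + (b - a) = b + 1 := by ring
  rw [e1] at h1
  rw [e2] at h2
  rw [Complex.Gamma_add_one a (my_ne_zero_of_re_pos ha),
    Complex.Gamma_add_one b (my_ne_zero_of_re_pos hb)] at h2
  have hGb : Complex.Gamma b ≠ 0 := Complex.Gamma_ne_zero_of_re_pos hb
  have hGa : Complex.Gamma a ≠ 0 := Complex.Gamma_ne_zero_of_re_pos ha
  have hb0 : b ≠ 0 := my_ne_zero_of_re_pos hb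
  have ha0 : a ≠ 0 := my_ne_zero_of_re_pos ha
  field_simp at h2 ⊢
  apply mul_left_cancel₀ hGb
  linear_combination a * h1 - h2

lemma ipochL_succ {a b : ℂ} (ha : 0 < a.re) (hab : a.re < b.re) (y : ℝ) (k : ℕ) :
    ipochL a b y (k + 1) = a / b * ipochL (a + 1) (b + 1) y k := by
  have hb : 0 < b.re := lt_trans ha hab
  have ha0 : a ≠ 0 := my_ne_zero_of_re_pos ha
  have hb0 : b ≠ 0 := my_ne_zero_of_re_pos hb
  have hB : Complex.betaIntegral a (b - a) ≠ 0 := beta_ne_zero ha hab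
  have e1 : a + ((k + 1 : ℕ) : ℂ) = (a + 1) + (k : ℕ) := by push_cast; ring
  have e2 : (b + 1) - (a + 1) = b - a := by ring
  rw [ipochL, ipochL, e1, e2, beta_shift ha hab]
  field_simp


lemma ipochL_bound {a b : ℂ} (ha : 0 < a.re) (hab : a.re < b.re) {y : ℝ}
    (hy0 : 0 ≤ y) (hy1 : y < 1) : ∃ M : ℝ, ∀ k : ℕ, ‖ipochL a b y k‖ ≤ M := by
  set q : ℝ := (b - a).re - 1 with hq
  set K : ℝ := max 1 ((1 - y) ^ q) with hKdef
  have h1y : 0 < 1 - y := by linarith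
  have hK0 : 0 ≤ K := le_trans zero_le_one (le_max_left _ _)
  have hBpos : 0 < ‖Complex.betaIntegral a (b - a)‖ :=
    norm_pos_iff.mpr (beta_ne_zero ha hab)
  have hint : IntervalIntegrable (fun t : ℝ => K * t ^ (a.re - 1)) MeasureTheory.volume 0 y :=
    (intervalIntegral.intervalIntegrable_rpow' (by linarith)).const_mul K
  refine ⟨|∫ t in (0:ℝ)..y, K * t ^ (a.re - 1)| / ‖Complex.betaIntegral a (b - a)‖, fun k => ?_⟩
  rw [ipochL, norm_div, div_le_div_iff_of_pos_right hBpos, incBeta]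
  apply intervalIntegral.norm_integral_le_abs_of_norm_le _ hint
  rw [Set.uIoc_of_le hy0]
  filter_upwards [MeasureTheory.ae_restrict_mem measurableSet_Ioc] with t ht
  obtain ⟨ht0, hty⟩ := ht
  have h1t : 0 < 1 - t := by linarith
  have hnorm1 : ‖(t:ℂ) ^ (a + (k:ℂ) - 1)‖ = t ^ (a.re + k - 1) := by
    rw [Complex.norm_cpow_eq_rpow_re_of_pos ht0]
    norm_num
  have hcast : (1 : ℂ) - (t:ℂ) = ((1 - t : ℝ) : ℂ) := by push_cast; ring
  have hnorm2 : ‖(1 - (t:ℂ)) ^ ((b - a) - 1)‖ = (1 - t) ^ q := by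
    rw [hcast, Complex.norm_cpow_eq_rpow_re_of_pos h1t]
    norm_num [hq]
  rw [norm_mul, hnorm1, hnorm2]
  have hb1 : (1 - t) ^ q ≤ K := by
    rcases le_or_gt 0 q with hq0 | hq0
    · exact le_trans (Real.rpow_le_one h1t.le (by linarith) hq0) (le_max_left _ _)
    · exact le_trans (Real.rpow_le_rpow_of_nonpos h1y (by linarith) hq0.le) (le_max_right _ _)
  have hb2 : t ^ (a.re + k - 1) ≤ t ^ (a.re - 1) := by
    rw [show a.re + k - 1 = (a.re - 1) + k by ring, Real.rpow_add ht0, Real.rpow_natCast]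
    have : t ^ k ≤ 1 := pow_le_one₀ ht0.le (by linarith)
    nlinarith [Real.rpow_pos_of_pos ht0 (a.re - 1)]
  have h3 : (0:ℝ) ≤ t ^ (a.re + k - 1) := Real.rpow_nonneg ht0.le _
  have h4 : (0:ℝ) ≤ (1 - t) ^ q := Real.rpow_nonneg h1t.le _
  calc t ^ (a.re + k - 1) * (1 - t) ^ q ≤ t ^ (a.re - 1) * K := by
        apply mul_le_mul hb2 hb1 h4 (Real.rpow_nonneg ht0.le _)
    _ = K * t ^ (a.re - 1) := by ring

lemma aux_summable (M R : ℝ) :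
    Summable (fun k : ℕ => M * ((k : ℝ) * R ^ (k - 1)) / k.factorial) := by
  apply (summable_nat_add_iff 1).mp
  have h : (fun n : ℕ => M * (((n+1 : ℕ) : ℝ) * R ^ (n + 1 - 1)) / (n+1).factorial)
      = fun n : ℕ => M * (R ^ n / n.factorial) := by
    funext n
    have hn1 : ((n:ℝ) + 1) ≠ 0 := by positivity
    have hnf : ((n.factorial : ℝ)) ≠ 0 := by positivity
    simp only [Nat.add_sub_cancel, Nat.factorial_succ]
    push_cast
    field_simp
  rw [h]
  exact (Real.summable_pow_div_factorial R).mul_left M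

lemma hasDerivAt_series (c : ℕ → ℂ) (M : ℝ) (hc : ∀ k, ‖c k‖ ≤ M) (x : ℂ) :
    HasDerivAt (fun w : ℂ => ∑' k : ℕ, c k * w ^ k / (k.factorial : ℂ))
      (∑' k : ℕ, c (k + 1) * x ^ k / (k.factorial : ℂ)) x := by
  have hM : 0 ≤ M := le_trans (norm_nonneg _) (hc 0)
  have hR0 : (0:ℝ) < ‖x‖ + 1 := by positivity
  have hxR : ‖x‖ < ‖x‖ + 1 := by linarith
  have husum := aux_summable M (‖x‖ + 1)
  have hderiv : ∀ (k : ℕ) (w : ℂ), w ∈ Metric.ball (0:ℂ) (‖x‖ + 1) →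
      HasDerivAt (fun w : ℂ => c k * w ^ k / (k.factorial : ℂ))
        (c k * ((k:ℂ) * w ^ (k - 1)) / (k.factorial : ℂ)) w :=
    fun k w _ => ((hasDerivAt_pow k w).const_mul (c k)).div_const _
  have hbound : ∀ (k : ℕ) (w : ℂ), w ∈ Metric.ball (0:ℂ) (‖x‖ + 1) →
      ‖c k * ((k:ℂ) * w ^ (k - 1)) / (k.factorial : ℂ)‖ ≤
        M * ((k : ℝ) * (‖x‖ + 1) ^ (k - 1)) / k.factorial := by
    intro k w hw
    rw [mem_ball_zero_iff] at hw
    rw [norm_div, norm_mul, norm_mul, norm_pow, Complex.norm_natCast, Complex.norm_natCast]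
    gcongr
    exact hc k

  have hmem : x ∈ Metric.ball (0:ℂ) (‖x‖ + 1) := mem_ball_zero_iff.mpr hxR
  have hsum0 : Summable (fun k : ℕ => c k * x ^ k / (k.factorial : ℂ)) := by
    have hg : Summable (fun k : ℕ => M * (‖x‖ ^ k / k.factorial)) :=
      (Real.summable_pow_div_factorial ‖x‖).mul_left M
    apply Summable.of_norm_bounded hg
    intro k
    rw [norm_div, norm_mul, norm_pow, Complex.norm_natCast, ← mul_div_assoc]
    gcongr
    exact hc k
  have main := hasDerivAt_tsum_of_isPreconnected husum Metric.isOpen_ball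
    (convex_ball (0:ℂ) (‖x‖ + 1)).isPreconnected hderiv hbound hmem hsum0 hmem
  have hs' : Summable (fun k : ℕ => c k * ((k:ℂ) * x ^ (k - 1)) / (k.factorial : ℂ)) :=
    Summable.of_norm_bounded husum fun k => hbound k x hmem
  refine main.congr_deriv ?_
  rw [hs'.tsum_eq_zero_add]
  have h0 : c 0 * (((0:ℕ):ℂ) * x ^ (0 - 1)) / ((Nat.factorial 0 : ℕ) : ℂ) = 0 := by simp
  rw [h0, zero_add]
  apply tsum_congr
  intro k
  have hn1 : ((k:ℂ) + 1) ≠ 0 := by exact_mod_cast Nat.succ_ne_zero k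
  have hnf : ((k.factorial : ℂ)) ≠ 0 := by
    exact_mod_cast Nat.cast_ne_zero.mpr k.factorial_ne_zero
  simp only [Nat.add_sub_cancel, Nat.factorial_succ]
  push_cast
  field_simp

lemma hasDerivAt_inc1F1L {a b : ℂ} (ha : 0 < a.re) (hab : a.re < b.re) {y : ℝ}
    (hy0 : 0 ≤ y) (hy1 : y < 1) (x : ℂ) :
    HasDerivAt (fun w : ℂ => inc1F1L a b y w)
      (a / b * inc1F1L (a + 1) (b + 1) y x) x := by
  obtain ⟨M, hM⟩ := ipochL_bound ha hab hy0 hy1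
  have h := hasDerivAt_series (fun k => ipochL a b y k) M hM x
  simp only [inc1F1L]
  convert h using 1
  rw [← tsum_mul_left]
  exact tsum_congr fun k => by rw [ipochL_succ ha hab]; ring

theorem stmt12 (a b : ℂ) (y : ℝ) (x : ℂ) (n : ℕ)
    (ha : 0 < a.re) (hab : a.re < b.re) (hy0 : 0 ≤ y) (hy1 : y < 1) :
    iteratedDeriv n (fun w : ℂ => inc1F1L a b y w) x =
      (poch a n / poch b n) * inc1F1L (a + n) (b + n) y x := by
  induction n generalizing x with
  | zero => simp [iteratedDeriv_zero, poch]
  | succ n ih =>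
    have hfun : iteratedDeriv n (fun w : ℂ => inc1F1L a b y w) =
        fun w => (poch a n / poch b n) * inc1F1L (a + n) (b + n) y w :=
      funext fun w => ih w
    rw [iteratedDeriv_succ, hfun]
    have hn : (0:ℝ) ≤ (n:ℝ) := Nat.cast_nonneg n
    have han : 0 < (a + (n:ℂ)).re := by
      simp only [Complex.add_re, Complex.natCast_re]; linarith
    have habn : (a + (n:ℂ)).re < (b + (n:ℂ)).re := by
      simp only [Complex.add_re, Complex.natCast_re]; linarith
    have hd := (hasDerivAt_inc1F1L han habn hy0 hy1 x).const_mul (poch a n / poch b n)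
    rw [hd.deriv]
    have e1 : a + ((n + 1 : ℕ) : ℂ) = a + n + 1 := by push_cast; ring
    have e2 : b + ((n + 1 : ℕ) : ℂ) = b + n + 1 := by push_cast; ring
    rw [e1, e2]
    have hpa : poch a (n + 1) = poch a n * (a + n) := Finset.prod_range_succ _ _
    have hpb : poch b (n + 1) = poch b n * (b + n) := Finset.prod_range_succ _ _
    rw [hpa, hpb]
    have h1 : poch b n ≠ 0 := poch_ne_zero_s12 (lt_trans ha hab) n
    have h2 : (b + (n:ℂ)) ≠ 0 := my_ne_zero_of_re_pos (by
      simp only [Complex.add_re, Complex.natCast_re]; linarith)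
    field_simp
end

section
/- For Re(β) > Re(α) > 0 and 0 ≤ y < 1, the Kummer-type transformation holds: ₁F₁({α,β;1-y};z) = e^z · ₁F₁([β-α,β;y];-z). -/
open Complex

section AuxStmt14
open Complex MeasureTheory Set

lemma aux_exp_tsum (x : ℂ) : Complex.exp x = ∑' n : ℕ, x ^ n / (n.factorial : ℂ) := by
  rw [Complex.exp_eq_exp_ℂ, NormedSpace.exp_eq_tsum_div]

lemma aux_integrableOn (p q : ℂ) (y : ℝ) (hp : 0 < p.re) (hq : 0 < q.re)
    (hy0 : 0 ≤ y) (hy1 : y ≤ 1) :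
    IntegrableOn (fun t : ℝ => (t:ℂ)^(p-1) * (1 - (t:ℂ))^(q-1)) (Ioc 0 y) := by
  have hsub : Set.uIcc (0:ℝ) y ⊆ Set.uIcc (0:ℝ) 1 := by
    rw [Set.uIcc_of_le hy0, Set.uIcc_of_le zero_le_one]
    exact Set.Icc_subset_Icc le_rfl hy1
  have h := (Complex.betaIntegral_convergent hp hq).mono_set hsub
  exact (intervalIntegrable_iff_integrableOn_Ioc_of_le hy0).mp h

lemma aux_tsum_U (p q w : ℂ) (y : ℝ) (hp : 0 < p.re) (hq : 0 < q.re)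
    (hy0 : 0 ≤ y) (hy1 : y < 1) :
    ∑' n : ℕ, incBeta y p (q + n) * w ^ n / (n.factorial : ℂ)
      = ∫ t in Ioc (0:ℝ) y,
          (t:ℂ)^(p-1) * (1 - (t:ℂ))^(q-1) * Complex.exp ((1 - (t:ℂ)) * w) := by
  set F : ℕ → ℝ → ℂ := fun n t =>
    (t:ℂ)^(p-1) * (1 - (t:ℂ))^(q + n - 1) * (w ^ n / (n.factorial : ℂ)) with hF
  have hqn : ∀ n : ℕ, 0 < (q + (n:ℂ)).re := by
    intro n; simp only [Complex.add_re, Complex.natCast_re]; positivity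
  have hterm : ∀ n : ℕ, incBeta y p (q + n) * w ^ n / (n.factorial : ℂ)
      = ∫ t in Ioc (0:ℝ) y, F n t := by
    intro n
    rw [incBeta, intervalIntegral.integral_of_le hy0, mul_div_assoc, ← integral_mul_const]
  have hFint : ∀ n : ℕ, IntegrableOn (F n) (Ioc 0 y) := fun n =>
    (aux_integrableOn p (q + n) y hp (hqn n) hy0 hy1.le).mul_const _
  set C : ℝ := ∫ t in Ioc (0:ℝ) y, ‖(t:ℂ)^(p-1) * (1 - (t:ℂ))^(q-1)‖ with hC
  have hbound : ∀ n : ℕ, (∫ t in Ioc (0:ℝ) y, ‖F n t‖) ≤ C * (‖w‖ ^ n / n.factorial) := by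
    intro n
    have hint1 : IntegrableOn (fun t : ℝ => ‖F n t‖) (Ioc 0 y) := (hFint n).norm
    have hint2 : IntegrableOn
        (fun t : ℝ => ‖(t:ℂ)^(p-1) * (1 - (t:ℂ))^(q-1)‖ * (‖w‖ ^ n / n.factorial))
        (Ioc 0 y) := ((aux_integrableOn p q y hp hq hy0 hy1.le).norm).mul_const _
    calc (∫ t in Ioc (0:ℝ) y, ‖F n t‖)
        ≤ ∫ t in Ioc (0:ℝ) y, ‖(t:ℂ)^(p-1) * (1 - (t:ℂ))^(q-1)‖ * (‖w‖ ^ n / n.factorial) := by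
          apply setIntegral_mono_on hint1 hint2 measurableSet_Ioc
          intro t ht
          have ht0 : (0:ℝ) < t := ht.1
          have ht1 : (0:ℝ) < 1 - t := by linarith [ht.2, hy1]
          have e1 : ‖(t:ℂ)^(p-1)‖ = t ^ (p.re - 1) := by
            rw [Complex.norm_cpow_eq_rpow_re_of_pos ht0]
            simp
          have e2 : ‖(1 - (t:ℂ))^(q + n - 1)‖ = (1-t) ^ (q.re + n - 1) := by
            have : (1 - (t:ℂ)) = ((1 - t : ℝ) : ℂ) := by push_cast; ring
            rw [this, Complex.norm_cpow_eq_rpow_re_of_pos ht1]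
            simp
          have e3 : ‖(1 - (t:ℂ))^(q - 1)‖ = (1-t) ^ (q.re - 1) := by
            have : (1 - (t:ℂ)) = ((1 - t : ℝ) : ℂ) := by push_cast; ring
            rw [this, Complex.norm_cpow_eq_rpow_re_of_pos ht1]
            simp
          have e4 : (1-t) ^ (q.re + n - 1) ≤ (1-t) ^ (q.re - 1) :=
            Real.rpow_le_rpow_of_exponent_ge ht1 (by linarith) (by
              have : (0:ℝ) ≤ (n:ℝ) := n.cast_nonneg
              linarith)
          have e5 : ‖w ^ n / (n.factorial : ℂ)‖ = ‖w‖ ^ n / n.factorial := by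
            rw [norm_div, norm_pow]
            simp
          rw [hF]
          simp only [norm_mul, e1, e2, e3, e5]
          have h0 : (0:ℝ) ≤ t ^ (p.re - 1) := Real.rpow_nonneg ht0.le _
          exact mul_le_mul_of_nonneg_right (mul_le_mul_of_nonneg_left e4 h0) (by positivity)
      _ = C * (‖w‖ ^ n / n.factorial) := by rw [hC, ← integral_mul_const]
  have hsum : Summable fun n : ℕ => ∫ t in Ioc (0:ℝ) y, ‖F n t‖ :=
    Summable.of_nonneg_of_le
      (fun n => integral_nonneg fun t => norm_nonneg _)
      hbound
      ((Real.summable_pow_div_factorial ‖w‖).mul_left C)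
  calc ∑' n : ℕ, incBeta y p (q + n) * w ^ n / (n.factorial : ℂ)
      = ∑' n : ℕ, ∫ t in Ioc (0:ℝ) y, F n t := tsum_congr hterm
    _ = ∫ t in Ioc (0:ℝ) y, ∑' n : ℕ, F n t :=
        integral_tsum_of_summable_integral_norm hFint hsum
    _ = ∫ t in Ioc (0:ℝ) y,
          (t:ℂ)^(p-1) * (1 - (t:ℂ))^(q-1) * Complex.exp ((1 - (t:ℂ)) * w) := by
        apply setIntegral_congr_fun measurableSet_Ioc
        intro t ht
        have ht0 : (0:ℝ) < t := ht.1
        have ht1 : (0:ℝ) < 1 - t := by linarith [ht.2, hy1]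
        have hne : (1 - (t:ℂ)) ≠ 0 := by
          have : (1 - (t:ℂ)) = ((1 - t : ℝ) : ℂ) := by push_cast; ring
          rw [this]
          exact_mod_cast ht1.ne'
        have key : ∀ n : ℕ, F n t
            = ((t:ℂ)^(p-1) * (1 - (t:ℂ))^(q-1)) * (((1 - (t:ℂ)) * w) ^ n / n.factorial) := by
          intro n
          have : (1 - (t:ℂ))^(q + n - 1) = (1 - (t:ℂ))^(q-1) * (1 - (t:ℂ))^(n:ℕ) := by
            rw [← Complex.cpow_natCast, ← Complex.cpow_add _ _ hne]
            ring_nf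
          rw [hF]
          simp only [this, mul_pow]
          ring
        simp only [key]
        rw [tsum_mul_left, ← aux_exp_tsum]

lemma aux_tsum_L (p q w : ℂ) (y : ℝ) (hp : 0 < p.re) (hq : 0 < q.re)
    (hy0 : 0 ≤ y) (hy1 : y < 1) :
    ∑' n : ℕ, incBeta y (p + n) q * w ^ n / (n.factorial : ℂ)
      = ∫ t in Ioc (0:ℝ) y,
          (t:ℂ)^(p-1) * (1 - (t:ℂ))^(q-1) * Complex.exp ((t:ℂ) * w) := by
  set F : ℕ → ℝ → ℂ := fun n t =>
    (t:ℂ)^(p + n - 1) * (1 - (t:ℂ))^(q - 1) * (w ^ n / (n.factorial : ℂ)) with hF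
  have hpn : ∀ n : ℕ, 0 < (p + (n:ℂ)).re := by
    intro n; simp only [Complex.add_re, Complex.natCast_re]; positivity
  have hterm : ∀ n : ℕ, incBeta y (p + n) q * w ^ n / (n.factorial : ℂ)
      = ∫ t in Ioc (0:ℝ) y, F n t := by
    intro n
    rw [incBeta, intervalIntegral.integral_of_le hy0, mul_div_assoc, ← integral_mul_const]
  have hFint : ∀ n : ℕ, IntegrableOn (F n) (Ioc 0 y) := fun n =>
    (aux_integrableOn (p + n) q y (hpn n) hq hy0 hy1.le).mul_const _
  set C : ℝ := ∫ t in Ioc (0:ℝ) y, ‖(t:ℂ)^(p-1) * (1 - (t:ℂ))^(q-1)‖ with hC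
  have hbound : ∀ n : ℕ, (∫ t in Ioc (0:ℝ) y, ‖F n t‖) ≤ C * (‖w‖ ^ n / n.factorial) := by
    intro n
    have hint1 : IntegrableOn (fun t : ℝ => ‖F n t‖) (Ioc 0 y) := (hFint n).norm
    have hint2 : IntegrableOn
        (fun t : ℝ => ‖(t:ℂ)^(p-1) * (1 - (t:ℂ))^(q-1)‖ * (‖w‖ ^ n / n.factorial))
        (Ioc 0 y) := ((aux_integrableOn p q y hp hq hy0 hy1.le).norm).mul_const _
    calc (∫ t in Ioc (0:ℝ) y, ‖F n t‖)
        ≤ ∫ t in Ioc (0:ℝ) y, ‖(t:ℂ)^(p-1) * (1 - (t:ℂ))^(q-1)‖ * (‖w‖ ^ n / n.factorial) := by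
          apply setIntegral_mono_on hint1 hint2 measurableSet_Ioc
          intro t ht
          have ht0 : (0:ℝ) < t := ht.1
          have htl1 : t ≤ 1 := by linarith [ht.2, hy1]
          have ht1 : (0:ℝ) < 1 - t := by linarith [ht.2, hy1]
          have e1 : ‖(t:ℂ)^(p + n - 1)‖ = t ^ (p.re + n - 1) := by
            rw [Complex.norm_cpow_eq_rpow_re_of_pos ht0]
            simp
          have e1' : ‖(t:ℂ)^(p - 1)‖ = t ^ (p.re - 1) := by
            rw [Complex.norm_cpow_eq_rpow_re_of_pos ht0]
            simp
          have e3 : ‖(1 - (t:ℂ))^(q - 1)‖ = (1-t) ^ (q.re - 1) := by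
            have : (1 - (t:ℂ)) = ((1 - t : ℝ) : ℂ) := by push_cast; ring
            rw [this, Complex.norm_cpow_eq_rpow_re_of_pos ht1]
            simp
          have e4 : t ^ (p.re + n - 1) ≤ t ^ (p.re - 1) :=
            Real.rpow_le_rpow_of_exponent_ge ht0 htl1 (by
              have : (0:ℝ) ≤ (n:ℝ) := n.cast_nonneg
              linarith)
          have e5 : ‖w ^ n / (n.factorial : ℂ)‖ = ‖w‖ ^ n / n.factorial := by
            rw [norm_div, norm_pow]
            simp
          rw [hF]
          simp only [norm_mul, e1, e1', e3, e5]
          have h0 : (0:ℝ) ≤ (1-t) ^ (q.re - 1) := Real.rpow_nonneg ht1.le _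
          exact mul_le_mul_of_nonneg_right (mul_le_mul_of_nonneg_right e4 h0) (by positivity)
      _ = C * (‖w‖ ^ n / n.factorial) := by rw [hC, ← integral_mul_const]
  have hsum : Summable fun n : ℕ => ∫ t in Ioc (0:ℝ) y, ‖F n t‖ :=
    Summable.of_nonneg_of_le
      (fun n => integral_nonneg fun t => norm_nonneg _)
      hbound
      ((Real.summable_pow_div_factorial ‖w‖).mul_left C)
  calc ∑' n : ℕ, incBeta y (p + n) q * w ^ n / (n.factorial : ℂ)
      = ∑' n : ℕ, ∫ t in Ioc (0:ℝ) y, F n t := tsum_congr hterm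
    _ = ∫ t in Ioc (0:ℝ) y, ∑' n : ℕ, F n t :=
        integral_tsum_of_summable_integral_norm hFint hsum
    _ = ∫ t in Ioc (0:ℝ) y,
          (t:ℂ)^(p-1) * (1 - (t:ℂ))^(q-1) * Complex.exp ((t:ℂ) * w) := by
        apply setIntegral_congr_fun measurableSet_Ioc
        intro t ht
        have ht0 : (0:ℝ) < t := ht.1
        have hne : (t:ℂ) ≠ 0 := by exact_mod_cast ht0.ne'
        have key : ∀ n : ℕ, F n t
            = ((t:ℂ)^(p-1) * (1 - (t:ℂ))^(q-1)) * (((t:ℂ) * w) ^ n / n.factorial) := by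
          intro n
          have : (t:ℂ)^(p + n - 1) = (t:ℂ)^(p-1) * (t:ℂ)^(n:ℕ) := by
            rw [← Complex.cpow_natCast, ← Complex.cpow_add _ _ hne]
            ring_nf
          rw [hF]
          simp only [this, mul_pow]
          ring
        simp only [key]
        rw [tsum_mul_left, ← aux_exp_tsum]

end AuxStmt14

theorem stmt14 (α β : ℂ) (y : ℝ) (z : ℂ)
    (hα : 0 < α.re) (hαβ : α.re < β.re) (hy0 : 0 ≤ y) (hy1 : y < 1) :
    inc1F1U α β (1 - y) z = Complex.exp z * inc1F1L (β - α) β y (-z) := by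
  have hβα : 0 < (β - α).re := by rw [Complex.sub_re]; linarith
  have h1y : (1:ℝ) - (1 - y) = y := by ring
  have hL : inc1F1U α β (1 - y) z
      = (∑' n : ℕ, incBeta y (β - α) (α + n) * z ^ n / (n.factorial : ℂ))
        * (Complex.betaIntegral α (β - α))⁻¹ := by
    rw [inc1F1U, ← tsum_mul_right]
    apply tsum_congr; intro n
    rw [ipochU, h1y]
    simp only [div_eq_mul_inv]
    ring
  have hR : inc1F1L (β - α) β y (-z)
      = (∑' n : ℕ, incBeta y ((β - α) + n) α * (-z) ^ n / (n.factorial : ℂ))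
        * (Complex.betaIntegral (β - α) α)⁻¹ := by
    rw [inc1F1L, ← tsum_mul_right]
    apply tsum_congr; intro n
    rw [ipochL, sub_sub_cancel]
    simp only [div_eq_mul_inv]
    ring
  rw [hL, hR, aux_tsum_U (β - α) α z y hβα hα hy0 hy1,
      aux_tsum_L (β - α) α (-z) y hβα hα hy0 hy1,
      Complex.betaIntegral_symm, ← mul_assoc]
  congr 1
  rw [← MeasureTheory.integral_const_mul]
  refine MeasureTheory.integral_congr_ae (Filter.Eventually.of_forall fun t => ?_)
  have harg : (1 - (t:ℂ)) * z = z + (t:ℂ) * (-z) := by ring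
  simp only [harg, Complex.exp_add]
  ring
end
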